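/- arXiv:2010.07579 — 4 statements merged into one kernel-verified Lean document; each statement's English description precedes it below -/
import Mathlib

section
/- Let τ ∈ 𝓕′ and n ≥ 0, and set τ₄^(n) = [[−2ⁿ/z₁(τ), −z₃(τ)/z₁(τ)],[−z₃(τ)/z₁(τ), 2^{−n}(z₂(τ) − z₃(τ)²/z₁(τ))]]. Then |y₃(τ₄^(n))| ≤ (3/2^{n+2})·y₁(τ₄^(n)), y₃(τ₄^(n))² ≤ (3/7)·y₁(τ₄^(n))·y₂(τ₄^(n)), and |x₂(τ₄^(n))| ≤ 9/2^{n+3}. -/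
open Complex

noncomputable section

/-- 2×2 complex matrices. -/
abbrev Mat2 := Matrix (Fin 2) (Fin 2) ℂ

/-- Membership in the genus-2 Siegel half space: symmetric with
positive definite imaginary part. -/
def inH2 (τ : Mat2) : Prop :=
  τ.IsSymm ∧ (τ.map Complex.im).PosDef

/-- Genus-2 theta constants with characteristics `a, b ∈ {0,1}²`. -/
def theta (a b : Fin 2 → ℤ) (τ : Mat2) : ℂ :=
  ∑' m : Fin 2 → ℤ,
    Complex.exp ((Real.pi : ℂ) * Complex.I *
      ((∑ i : Fin 2, ∑ j : Fin 2,
          ((m i : ℂ) + (a i : ℂ) / 2) * τ i j * ((m j : ℂ) + (a j : ℂ) / 2)) +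
        ∑ i : Fin 2, ((m i : ℂ) + (a i : ℂ) / 2) * ((b i : ℂ) / 2)))

/-- Numbered theta constants: `θ_{(a₀,a₁),(b₀,b₁)} = θ_j` with
`j = b₀ + 2 b₁ + 4 a₀ + 8 a₁`. -/
def thetaIdx (j : ℕ) (τ : Mat2) : ℂ :=
  theta ![((j / 4 % 2 : ℕ) : ℤ), ((j / 8 % 2 : ℕ) : ℤ)]
    ![((j % 2 : ℕ) : ℤ), ((j / 2 % 2 : ℕ) : ℤ)] τ

def z1 (τ : Mat2) : ℂ := τ 0 0
def z2 (τ : Mat2) : ℂ := τ 1 1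
def z3 (τ : Mat2) : ℂ := τ 0 1
def x1 (τ : Mat2) : ℝ := (z1 τ).re
def x2 (τ : Mat2) : ℝ := (z2 τ).re
def x3 (τ : Mat2) : ℝ := (z3 τ).re
def y1 (τ : Mat2) : ℝ := (z1 τ).im
def y2 (τ : Mat2) : ℝ := (z2 τ).im
def y3 (τ : Mat2) : ℝ := (z3 τ).im
def q1 (τ : Mat2) : ℝ := Real.exp (-Real.pi * y1 τ)
def q2 (τ : Mat2) : ℝ := Real.exp (-Real.pi * y2 τ)

/-- The domain 𝓕′ containing the fundamental domain 𝓕₂. -/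
def inF' (τ : Mat2) : Prop :=
  inH2 τ ∧ |x1 τ| ≤ 1/2 ∧ |x2 τ| ≤ 1/2 ∧ |x3 τ| ≤ 1/2 ∧
    2 * |y3 τ| ≤ y1 τ ∧ y1 τ ≤ y2 τ ∧ Real.sqrt 3 / 2 ≤ y1 τ ∧
    1 ≤ ‖z1 τ‖ ∧ 1 ≤ ‖z2 τ‖

/-- A set of complex numbers is in good position if it is contained in
an open quarter plane. -/
def GoodPosition (s : Set ℂ) : Prop :=
  ∃ u : ℂ, ‖u‖ = 1 ∧ ∀ z ∈ s, 0 < (u * z).re ∧ 0 < (u * z).im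

/-- Action of a block matrix `[[A,B],[C,D]]` on the Siegel half space. -/
def actBlocks (A B C D τ : Mat2) : Mat2 := (A * τ + B) * (C * τ + D)⁻¹

/-- The matrices S₁, S₂, S₃. -/
def Smat : ℕ → Mat2
  | 1 => !![1, 0; 0, 0]
  | 2 => !![0, 0; 0, 1]
  | 3 => !![0, 1; 1, 0]
  | _ => 0

/-- Action of γ_k on ℋ₂, for 0 ≤ k ≤ 3: γ₀ = I₄ and
γ_k = [[−I₂, −S_k],[S_k, −I₂+S_k²]] for k = 1,2,3. -/
def gammaAction (k : ℕ) (τ : Mat2) : Mat2 :=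
  if k = 0 then τ
  else actBlocks (-1) (-(Smat k)) (Smat k) (-1 + Smat k ^ 2) τ

/-- τ₁⁽ⁿ⁾ = [[2⁻ⁿz₁, z₃],[z₃, 2ⁿz₂]]. -/
def tau1n (n : ℕ) (τ : Mat2) : Mat2 :=
  !![((2:ℂ)^n)⁻¹ * z1 τ, z3 τ; z3 τ, (2:ℂ)^n * z2 τ]

/-- τ₂⁽ⁿ⁾ = [[2ⁿz₁, z₃],[z₃, 2⁻ⁿz₂]]. -/
def tau2n (n : ℕ) (τ : Mat2) : Mat2 :=
  !![(2:ℂ)^n * z1 τ, z3 τ; z3 τ, ((2:ℂ)^n)⁻¹ * z2 τ]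

/-- τ₄⁽ⁿ⁾ = [[−2ⁿ/z₁, −z₃/z₁],[−z₃/z₁, 2⁻ⁿ(z₂ − z₃²/z₁)]]. -/
def tau4n (n : ℕ) (τ : Mat2) : Mat2 :=
  !![-(2:ℂ)^n / z1 τ, -z3 τ / z1 τ;
     -z3 τ / z1 τ, ((2:ℂ)^n)⁻¹ * (z2 τ - z3 τ ^ 2 / z1 τ)]

/-- Smallest eigenvalue of Im τ, for a symmetric 2×2 matrix τ. -/
def lambda1 (τ : Mat2) : ℝ :=
  (y1 τ + y2 τ - Real.sqrt ((y1 τ - y2 τ) ^ 2 + 4 * y3 τ ^ 2)) / 2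

/-- r(τ) = min{λ₁(τ), y₁(τ)/2, y₂(τ)/2}. -/
def rmin (τ : Mat2) : ℝ := min (lambda1 τ) (min (y1 τ / 2) (y2 τ / 2))

def xi46 (τ : Mat2) : ℂ := 2 * Complex.exp ((Real.pi : ℂ) * Complex.I * z1 τ / 4)

def xi89 (τ : Mat2) : ℂ := 2 * Complex.exp ((Real.pi : ℂ) * Complex.I * z2 τ / 4)

def xi0 (τ : Mat2) : ℂ :=
  1 + 2 * Complex.exp ((Real.pi : ℂ) * Complex.I * z1 τ) +
    2 * Complex.exp ((Real.pi : ℂ) * Complex.I * z2 τ)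

def xi02 (τ : Mat2) : ℂ := 1 + 2 * Complex.exp ((Real.pi : ℂ) * Complex.I * z1 τ)

def xi01 (τ : Mat2) : ℂ := 1 + 2 * Complex.exp ((Real.pi : ℂ) * Complex.I * z2 τ)

def xi12 (τ : Mat2) : ℂ :=
  Complex.exp ((Real.pi : ℂ) * Complex.I * (z1 τ + z2 τ) / 4) *
    (Complex.exp ((Real.pi : ℂ) * Complex.I * z3 τ / 2) +
      Complex.exp (-((Real.pi : ℂ) * Complex.I * z3 τ / 2)))

/-- ρ_{4,6}^{(k)}(q₁,q₂); here `s` plays the role of q₁ and `t` of q₂. -/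
def rho46 (k s t : ℝ) : ℝ :=
  s ^ (2:ℝ) / (1 - s ^ (4:ℝ)) + t ^ (1 - 1/k) / (1 - t ^ (3 - 1/k)) +
    t ^ (1 + 1/k) / (1 - t ^ (3 + 1/k)) +
    s ^ ((7:ℝ)/8) * t ^ ((1:ℝ)/2) / ((1 - t ^ ((3:ℝ)/2)) * (1 - s ^ (2:ℝ))) +
    s ^ ((25:ℝ)/8) * t ^ ((3:ℝ)/2) / ((1 - t ^ ((9:ℝ)/2)) * (1 - s ^ (6:ℝ)))

/-- ρ_{8,9}^{(k)}(q₁,q₂); here `s` plays the role of q₁ and `t` of q₂. -/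
def rho89 (k s t : ℝ) : ℝ :=
  t ^ (2:ℝ) / (1 - t ^ (4:ℝ)) + s ^ (1 - 1/k) / (1 - s ^ (3 - 1/k)) +
    s ^ (1 + 1/k) / (1 - s ^ (3 + 1/k)) +
    t ^ ((7:ℝ)/8) * s ^ ((1:ℝ)/2) / ((1 - s ^ ((3:ℝ)/2)) * (1 - t ^ (2:ℝ))) +
    t ^ ((25:ℝ)/8) * s ^ ((3:ℝ)/2) / ((1 - s ^ ((9:ℝ)/2)) * (1 - t ^ (6:ℝ)))

/-- ρ₀(q₁,q₂). -/
def rho0 (s t : ℝ) : ℝ :=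
  2 * s ^ (4:ℝ) / (1 - s ^ (5:ℝ)) + 2 * t ^ (4:ℝ) / (1 - t ^ (5:ℝ)) +
    2 * s ^ ((1:ℝ)/2) * t ^ ((1:ℝ)/2) / ((1 - s ^ ((3:ℝ)/2)) * (1 - t ^ ((3:ℝ)/2))) +
    2 * s ^ ((3:ℝ)/2) * t ^ ((3:ℝ)/2) / ((1 - s ^ ((9:ℝ)/2)) * (1 - t ^ ((9:ℝ)/2)))

/-- ρ₁₂(q₁,q₂). -/
def rho12 (s t : ℝ) : ℝ :=
  s ^ ((3:ℝ)/2) / (1 - s ^ ((7:ℝ)/2)) + s ^ ((5:ℝ)/2) / (1 - s ^ ((9:ℝ)/2)) +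
    t ^ ((3:ℝ)/2) / (1 - t ^ ((7:ℝ)/2)) + t ^ ((5:ℝ)/2) / (1 - t ^ ((9:ℝ)/2)) +
    s ^ ((7:ℝ)/8) * t ^ ((7:ℝ)/8) / ((1 - s ^ (2:ℝ)) * (1 - t ^ (2:ℝ))) +
    s ^ ((25:ℝ)/8) * t ^ ((25:ℝ)/8) / ((1 - s ^ (6:ℝ)) * (1 - t ^ (6:ℝ)))

/-- α = √(3/7). -/
def alph : ℝ := Real.sqrt (3/7)

/-- ρ'_{0,1}^{(k)}(q₁,q₂); here `s` plays the role of q₁ and `t` of q₂. -/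
def rho01' (k s t : ℝ) : ℝ :=
  2 * t ^ (4:ℝ) / (1 - t ^ (5:ℝ)) + 2 * s / (1 - s ^ (3:ℝ)) +
    2 * s ^ (1 - 2/k) * t / (1 - s ^ (3 - 2/k)) +
    2 * s ^ (1 + 2/k) * t / (1 - s ^ (3 + 2/k)) +
    2 * s ^ (1 - alph) * t ^ (4 * (1 - alph)) /
      ((1 - s ^ (3 * (1 - alph))) * (1 - t ^ (5 * (1 - alph)))) +
    2 * s ^ (1 + alph) * t ^ (4 * (1 + alph)) /
      ((1 - s ^ (3 * (1 + alph))) * (1 - t ^ (5 * (1 + alph))))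

/-- ρ'_{8,9}^{(k)}(q₁,q₂); here `s` plays the role of q₁ and `t` of q₂. -/
def rho89' (k s t : ℝ) : ℝ :=
  t ^ (2:ℝ) / (1 - t ^ (4:ℝ)) + s ^ (1 - 1/k) / (1 - s ^ (3 - 1/k)) +
    s ^ (1 + 1/k) / (1 - s ^ (3 + 1/k)) +
    t ^ (2 - (9/4) * alph) * s ^ (1 - alph) /
      ((1 - t ^ (4 * (1 - alph))) * (1 - s ^ (3 * (1 - alph)))) +
    t ^ (2 + (9/4) * alph) * s ^ (1 + alph) /
      ((1 - t ^ (4 * (1 + alph))) * (1 - s ^ (3 * (1 + alph))))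


private lemma aux_L1 (a1 u v b1 : ℝ) (ha : |a1| ≤ 1/2) (hu : |u| ≤ 1/2)
    (hv : 2*|v| ≤ b1) : |u*b1 - a1*v| ≤ 3/4*b1 := by
  have hb0 : 0 ≤ b1 := le_trans (by positivity) hv
  have h1 : |u*b1| ≤ 1/2*b1 := by
    rw [abs_mul, _root_.abs_of_nonneg hb0]; nlinarith [abs_nonneg u]
  have h2 : |a1*v| ≤ 1/4*b1 := by
    rw [abs_mul]; nlinarith [abs_nonneg a1, abs_nonneg v]
  calc |u*b1 - a1*v| ≤ |u*b1| + |a1*v| := abs_sub _ _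
    _ ≤ 3/4*b1 := by linarith

set_option maxHeartbeats 2000000 in
private lemma aux_L2 (a1 u v b1 b2 : ℝ) (ha : |a1| ≤ 1/2) (hu : |u| ≤ 1/2)
    (hv : 2*|v| ≤ b1) (hb0 : 0 < b1) (hd1 : 1 ≤ a1^2 + b1^2) (hb12 : b1 ≤ b2) :
    7*(u*b1 - a1*v)^2 ≤ 3*b1*(b2*(a1^2+b1^2) - 2*a1*u*v + (u^2-v^2)*b1) := by
  have ha2 : a1^2 ≤ 1/4 := by nlinarith [abs_nonneg a1, _root_.sq_abs a1]
  have hu2 : u^2 ≤ 1/4 := by nlinarith [abs_nonneg u, _root_.sq_abs u]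
  have hv2 : v^2 ≤ b1^2/4 := by nlinarith [abs_nonneg v, _root_.sq_abs v]
  have t1 : 0 ≤ b1^2*(1-4*u^2) := by nlinarith
  have t2 : 0 ≤ 4*b1*(2*u*(a1*v) + |a1| * |v|) := by
    have h1 : |2*u*(a1*v)| ≤ |a1| * |v| := by
      rw [abs_mul, abs_mul, abs_mul, _root_.abs_two]
      nlinarith [abs_nonneg u, abs_nonneg a1, abs_nonneg v,
        mul_nonneg (abs_nonneg a1) (abs_nonneg v)]
    nlinarith [neg_abs_le (2*u*(a1*v))]
  have t3 : 0 ≤ 7*a1^2*(b1^2/4 - v^2) := by nlinarith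
  have t4 : 0 ≤ 3*b1^2*(b1^2/4 - v^2) := by nlinarith
  have t5 : 0 ≤ 4 * |a1| * b1 * (b1/2 - |v|) := by
    have : 0 ≤ b1/2 - |v| := by linarith
    positivity
  have t6 : 0 ≤ (9/4)*b1^2*(a1^2 + b1^2 - 1) := by nlinarith
  have t7 : 0 ≤ b1^2*(1/2 - |a1|)*(5/2 + |a1|) := by
    have h1 : 0 ≤ 1/2 - |a1| := by linarith
    have h2 : 0 ≤ 5/2 + |a1| := by positivity
    positivity
  have hbd : 0 ≤ 3*b1*(b2 - b1)*(a1^2+b1^2) := by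
    apply mul_nonneg (mul_nonneg (by linarith) (by linarith)); positivity
  have hF : 3*b1*(b1*(a1^2+b1^2) - 2*a1*u*v + (u^2-v^2)*b1) - 7*(u*b1-a1*v)^2 =
      b1^2*(1-4*u^2) + 4*b1*(2*u*(a1*v) + |a1| * |v|) + 7*a1^2*(b1^2/4 - v^2) +
      3*b1^2*(b1^2/4 - v^2) + 4 * |a1| * b1 * (b1/2 - |v|) +
      (9/4)*b1^2*(a1^2+b1^2-1) + b1^2*(1/2 - |a1|)*(5/2 + |a1|) := by
    linear_combination b1^2 * (_root_.sq_abs a1)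
  linarith [t1, t2, t3, t4, t5, t6, t7, hbd, hF]

set_option maxHeartbeats 2000000 in
private lemma aux_L3 (a1 a2 u v b1 : ℝ) (ha : |a1| ≤ 1/2) (ha2 : |a2| ≤ 1/2)
    (hu : |u| ≤ 1/2) (hv : 2*|v| ≤ b1) (hb0 : 0 < b1)
    (hd1 : 1 ≤ a1^2 + b1^2) :
    |a2*(a1^2+b1^2) - ((u^2-v^2)*a1 + 2*(u*v)*b1)| ≤ 9/8*(a1^2+b1^2) := by
  have hd0 : (0:ℝ) < a1^2+b1^2 := by nlinarith [sq_nonneg a1]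
  have h1 : |a2*(a1^2+b1^2)| ≤ 1/2*(a1^2+b1^2) := by
    rw [abs_mul, _root_.abs_of_pos hd0]; nlinarith [abs_nonneg a2]
  have e1 : |(u^2-v^2)*a1 + 2*(u*v)*b1| ≤ |u^2-v^2| * |a1| + 2*(|u| * |v|)*b1 := by
    calc |(u^2-v^2)*a1 + 2*(u*v)*b1| ≤ |(u^2-v^2)*a1| + |2*(u*v)*b1| := abs_add_le _ _
      _ = |u^2-v^2| * |a1| + 2*(|u| * |v|)*b1 := by
          rw [abs_mul, abs_mul, abs_mul, abs_mul, _root_.abs_two, _root_.abs_of_pos hb0]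
  have hv' : |v| ≤ b1/2 := by linarith
  have h2 : |u^2-v^2| * |a1| + 2*(|u| * |v|)*b1 ≤ 5/8*(a1^2+b1^2) := by
    rcases le_total b1 1 with hb1 | hb1
    · have h3 : |u^2-v^2| ≤ 1/4 := by
        rw [abs_le]
        constructor <;> nlinarith [_root_.sq_abs u, _root_.sq_abs v, abs_nonneg u, abs_nonneg v]
      have p1 : |u^2-v^2| * |a1| ≤ 1/8 := by
        nlinarith [abs_nonneg a1, abs_nonneg (u^2-v^2)]
      have q : |u| * |v| * b1 ≤ 1/2 * (b1/2) * b1 :=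
        mul_le_mul_of_nonneg_right (mul_le_mul hu hv' (abs_nonneg v) (by norm_num)) hb0.le
      have p2 : 2*(|u| * |v|)*b1 ≤ 1/2 := by nlinarith [q]
      linarith
    · have hb1sq : 1 ≤ b1^2 := by nlinarith
      have h3 : |u^2-v^2| ≤ b1^2/4 := by
        rw [abs_le]
        constructor <;> nlinarith [_root_.sq_abs u, _root_.sq_abs v, abs_nonneg u, abs_nonneg v]
      have p1 : |u^2-v^2| * |a1| ≤ b1^2/8 := by
        nlinarith [abs_nonneg a1, abs_nonneg (u^2-v^2)]
      have q : |u| * |v| * b1 ≤ 1/2 * (b1/2) * b1 :=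
        mul_le_mul_of_nonneg_right (mul_le_mul hu hv' (abs_nonneg v) (by norm_num)) hb0.le
      have p2 : 2*(|u| * |v|)*b1 ≤ b1^2/2 := by nlinarith [q]
      nlinarith [sq_nonneg a1]
  calc |a2*(a1^2+b1^2) - ((u^2-v^2)*a1 + 2*(u*v)*b1)|
      ≤ |a2*(a1^2+b1^2)| + |(u^2-v^2)*a1 + 2*(u*v)*b1| := abs_sub _ _
    _ ≤ 9/8*(a1^2+b1^2) := by linarith

/-- Estimates on the entries of τ₄⁽ⁿ⁾ for τ ∈ 𝓕′. -/
theorem stmt_5 (τ : Mat2) (hτ : inF' τ) (n : ℕ) :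
    |y3 (tau4n n τ)| ≤ 3 / 2^(n+2) * y1 (tau4n n τ) ∧
    y3 (tau4n n τ) ^ 2 ≤ 3/7 * y1 (tau4n n τ) * y2 (tau4n n τ) ∧
    |x2 (tau4n n τ)| ≤ 9 / 2^(n+3) := by
  obtain ⟨⟨hsym, hpos⟩, hx1, hx2, hx3, hy3, hy12, hy1s, hz1, hz2⟩ := hτ
  simp only [x1, x2, x3, y1, y2, y3] at hx1 hx2 hx3 hy3 hy12 hy1s
  set a1 := (z1 τ).re with ha1def
  set b1 := (z1 τ).im with hb1def
  set a2 := (z2 τ).re with ha2def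
  set b2 := (z2 τ).im with hb2def
  set u := (z3 τ).re with hudef
  set c := (z3 τ).im with hcdef
  have s3 : Real.sqrt 3 ^ 2 = 3 := Real.sq_sqrt (by norm_num)
  have s3p : 0 < Real.sqrt 3 := Real.sqrt_pos.2 (by norm_num)
  have hb0 : 0 < b1 := by nlinarith
  have hbsq : 3/4 ≤ b1^2 := by nlinarith
  have hd : Complex.normSq (z1 τ) = a1^2 + b1^2 := by
    rw [Complex.normSq_apply]; ring
  have hd1 : 1 ≤ a1^2 + b1^2 := by
    have h := Complex.sq_norm (z1 τ)
    rw [Complex.normSq_apply] at h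
    nlinarith [hz1]
  have hd0 : (0:ℝ) < a1^2 + b1^2 := by nlinarith [sq_nonneg a1]
  have h2n : (0:ℝ) < 2^n := by positivity
  have E1 : y1 (tau4n n τ) = 2^n * b1 / (a1^2+b1^2) := by
    have e : y1 (tau4n n τ) = (-(2:ℂ)^n / z1 τ).im := by simp [y1, z1, tau4n]
    rw [e, show (-(2:ℂ)^n) = ((-(2:ℝ)^n : ℝ):ℂ) by push_cast; ring, Complex.div_im,
      Complex.ofReal_im, Complex.ofReal_re, hd]
    ring
  have E3 : y3 (tau4n n τ) = (u * b1 - a1 * c) / (a1^2+b1^2) := by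
    have e : y3 (tau4n n τ) = (-z3 τ / z1 τ).im := by simp [y3, z3, tau4n]
    rw [e, Complex.div_im, hd, Complex.neg_im, Complex.neg_re]
    ring
  have E2 : y2 (tau4n n τ) = ((2:ℝ)^n)⁻¹ *
      (b2 - (2*a1*u*c - (u^2 - c^2)*b1) / (a1^2+b1^2)) := by
    have e : y2 (tau4n n τ) = (((2:ℂ)^n)⁻¹ * (z2 τ - z3 τ ^ 2 / z1 τ)).im := by
      simp [y2, z2, tau4n]
    rw [e, show (((2:ℂ)^n)⁻¹) = ((((2:ℝ)^n)⁻¹ : ℝ):ℂ) by push_cast; ring,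
      Complex.im_ofReal_mul, Complex.sub_im, Complex.div_im, pow_two,
      Complex.mul_im, Complex.mul_re, hd]
    ring
  have EX : x2 (tau4n n τ) = ((2:ℝ)^n)⁻¹ *
      (a2 - ((u^2 - c^2)*a1 + 2*(u*c)*b1) / (a1^2+b1^2)) := by
    have e : x2 (tau4n n τ) = (((2:ℂ)^n)⁻¹ * (z2 τ - z3 τ ^ 2 / z1 τ)).re := by
      simp [x2, z2, tau4n]
    rw [e, show (((2:ℂ)^n)⁻¹) = ((((2:ℝ)^n)⁻¹ : ℝ):ℂ) by push_cast; ring,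
      Complex.re_ofReal_mul, Complex.sub_re, Complex.div_re, pow_two,
      Complex.mul_im, Complex.mul_re, hd]
    ring
  refine ⟨?_, ?_, ?_⟩
  · -- first inequality
    have key1 : |u * b1 - a1 * c| ≤ 3/4 * b1 := aux_L1 a1 u c b1 hx1 hx3 hy3
    rw [E3, E1]
    have hrhs : (3:ℝ) / 2^(n+2) * (2^n * b1 / (a1^2+b1^2)) =
        (3/4 * b1) / (a1^2+b1^2) := by
      rw [pow_add]; field_simp; ring
    rw [hrhs, abs_div, _root_.abs_of_pos hd0]
    exact (div_le_div_iff_of_pos_right hd0).mpr key1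
  · -- second inequality
    have key2 := aux_L2 a1 u c b1 b2 hx1 hx3 hy3 hb0 hd1 hy12
    rw [E3, E1, E2, ← sub_nonneg]
    have hident : 3/7 * (2^n * b1 / (a1^2+b1^2)) *
        (((2:ℝ)^n)⁻¹ * (b2 - (2*a1*u*c - (u^2 - c^2)*b1) / (a1^2+b1^2))) -
        ((u * b1 - a1 * c) / (a1^2+b1^2))^2 =
        (3*b1*(b2*(a1^2+b1^2) - 2*a1*u*c + (u^2-c^2)*b1) - 7*(u*b1 - a1*c)^2) /
          (7*(a1^2+b1^2)^2) := by
      field_simp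
      ring
    rw [hident]
    apply div_nonneg (by linarith) (by positivity)
  · -- third inequality
    have key3 := aux_L3 a1 a2 u c b1 hx1 hx2 hx3 hy3 hb0 hd1
    rw [EX]
    have e : ((2:ℝ)^n)⁻¹ * (a2 - ((u^2 - c^2)*a1 + 2*(u*c)*b1) / (a1^2+b1^2)) =
        (a2*(a1^2+b1^2) - ((u^2-c^2)*a1 + 2*(u*c)*b1)) / ((a1^2+b1^2) * 2^n) := by
      rw [eq_div_iff (ne_of_gt (mul_pos hd0 h2n))]
      field_simp
    rw [e, abs_div, _root_.abs_of_pos (mul_pos hd0 h2n), div_le_iff₀ (mul_pos hd0 h2n)]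
    have hrhs : (9:ℝ) / 2^(n+3) * ((a1^2+b1^2) * 2^n) = 9/8 * (a1^2+b1^2) := by
      rw [pow_add]; field_simp; ring
    rw [hrhs]
    exact key3
end
end

section
/- Let k ≥ 1 be a real number and let τ ∈ ℋ₂ satisfy y₃(τ)² ≤ (1/4)·y₁(τ)·y₂(τ) and k·|y₃(τ)| ≤ y₂(τ). Then for j ∈ {4,6}, |θ_j(τ)/ξ_{4,6}(τ) − 1| ≤ ρ_{4,6}^{(k)}(q₁(τ), q₂(τ)). -/
open Complex

noncomputable section

namespace Aux7

lemma exp_rpow (c x : ℝ) : Real.exp c ^ x = Real.exp (c * x) := by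
  rw [Real.rpow_def_of_pos (Real.exp_pos c), Real.log_exp]

lemma pair_exp {x C : ℝ} (h : |x| ≤ C) :
    Real.exp x + Real.exp (-x) ≤ Real.exp C + Real.exp (-C) := by
  have h1 : Real.cosh x ≤ Real.cosh C := by
    rw [Real.cosh_le_cosh, _root_.abs_of_nonneg ((_root_.abs_nonneg x).trans h)]
    exact h
  rw [Real.cosh_eq, Real.cosh_eq] at h1
  linarith

lemma cross_bound {u v : ℝ} (hu : 0 ≤ u) (hv : 0 ≤ v) {w : ℝ} (hw : 4*w^2 ≤ u*v) (a n : ℝ) :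
    |2*a*n*w| ≤ (a^2*u + n^2*v)/2 := by
  have hsu := Real.sq_sqrt hu
  have hsv := Real.sq_sqrt hv
  have h2w : 2*|w| ≤ Real.sqrt u * Real.sqrt v := by
    have := Real.sqrt_le_sqrt hw
    rwa [show (4:ℝ)*w^2 = (2*|w|)^2 by rw [mul_pow, _root_.sq_abs]; ring,
      Real.sqrt_sq (by positivity), Real.sqrt_mul hu] at this
  have h3 : |2*a*n*w| = |a| * |n| * (2 * |w|) := by
    rw [_root_.abs_mul, _root_.abs_mul, _root_.abs_mul]
    simp [_root_.abs_of_nonneg]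
    ring
  rw [h3]
  refine (mul_le_mul_of_nonneg_left h2w (by positivity)).trans ?_
  nlinarith [sq_nonneg (|a| * Real.sqrt u - |n| * Real.sqrt v), _root_.sq_abs a, _root_.sq_abs n]

lemma tail_bound {t : ℝ} (ht0 : 0 < t) (ht1 : t < 1) {e r : ℝ} (hr : 0 < r)
    {f : ℕ → ℝ} (h0 : ∀ n, 0 ≤ f n) (hle : ∀ n, f n ≤ t ^ (e + r * n)) :
    Summable f ∧ ∑' n, f n ≤ t ^ e / (1 - t ^ r) := by
  have key : ∀ n : ℕ, t ^ (e + r * n) = t ^ e * (t ^ r) ^ n := by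
    intro n
    rw [Real.rpow_add ht0, Real.rpow_mul ht0.le, Real.rpow_natCast]
  have htr0 : 0 ≤ t ^ r := Real.rpow_nonneg ht0.le r
  have htr1 : t ^ r < 1 := Real.rpow_lt_one ht0.le ht1 hr
  have hg : Summable (fun n : ℕ => t ^ e * (t ^ r) ^ n) :=
    (summable_geometric_of_lt_one htr0 htr1).mul_left _
  have hf : Summable f := by
    refine Summable.of_nonneg_of_le h0 (fun n => ?_) hg
    rw [← key]; exact hle n
  refine ⟨hf, ?_⟩
  calc ∑' n, f n ≤ ∑' n : ℕ, t ^ e * (t ^ r) ^ n := by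
        refine Summable.tsum_le_tsum (fun n => ?_) hf hg
        rw [← key]; exact hle n
    _ = t ^ e / (1 - t ^ r) := by
        rw [tsum_mul_left, tsum_geometric_of_lt_one htr0 htr1, div_eq_mul_inv]

noncomputable def Fr (u v w : ℝ) (p : ℤ × ℤ) : ℝ :=
  Real.exp (-(((p.1:ℝ)+1/2)^2*u + 2*((p.1:ℝ)+1/2)*(p.2:ℝ)*w + (p.2:ℝ)^2*v))


set_option maxHeartbeats 2000000 in
lemma main_real {k u v w : ℝ} (hk : 1 ≤ k) (hu : 0 < u) (hv : 0 < v)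
    (hw : 4 * w^2 ≤ u * v) (hkw : k * |w| ≤ v) :
    Summable (Fr u v w) ∧
      ∑' p, Fr u v w p ≤
        2 * Real.exp (-(u/4)) * (1 + rho46 k (Real.exp (-u)) (Real.exp (-v))) := by
  have hk0 : (0:ℝ) < k := lt_of_lt_of_le one_pos hk
  have hik0 : (0:ℝ) ≤ 1/k := by positivity
  have hik1 : 1/k ≤ 1 := by rw [div_le_one hk0]; exact hk
  set s := Real.exp (-u) with hs_def
  set t := Real.exp (-v) with ht_def
  have hs0 : 0 < s := Real.exp_pos _
  have ht0 : 0 < t := Real.exp_pos _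
  have hs1 : s < 1 := by
    rw [hs_def, show (1:ℝ) = Real.exp 0 by simp]
    exact Real.exp_lt_exp.2 (by linarith)
  have ht1 : t < 1 := by
    rw [ht_def, show (1:ℝ) = Real.exp 0 by simp]
    exact Real.exp_lt_exp.2 (by linarith)
  have hFpos : ∀ p, 0 ≤ Fr u v w p := fun p => (Real.exp_pos _).le
  have key : ∀ (a n : ℝ), Real.exp (-(a^2*u + 2*a*n*w + n^2*v)) ≤
      Real.exp (-(a^2*u)/2) * Real.exp (-(n^2*v)/2) := by
    intro a n
    rw [← Real.exp_add]
    apply Real.exp_le_exp.2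
    have h1 := cross_bound hu.le hv.le hw a n
    have h2 := neg_abs_le (2*a*n*w)
    linarith
  have hm_nat : Summable (fun i : ℕ => Real.exp (-((((i:ℕ):ℝ)+1/2)^2*u)/2)) := by
    refine (tail_bound hs0 hs1 (e := (1:ℝ)/8) (r := (1:ℝ)/2) (by norm_num)
      (fun i => (Real.exp_pos _).le) (fun i => ?_)).1
    rw [hs_def, exp_rpow]
    apply Real.exp_le_exp.2
    have hi : (0:ℝ) ≤ (i:ℝ) := Nat.cast_nonneg i
    nlinarith [sq_nonneg ((i:ℝ)), hu.le]
  have hm : Summable (fun m : ℤ => Real.exp (-((((m:ℤ):ℝ)+1/2)^2*u)/2)) := by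
    refine Summable.of_nat_of_neg_add_one (hm_nat.congr fun i => ?_) (hm_nat.congr fun i => ?_)
      <;> (push_cast; ring_nf)
  have hn_nat0 : Summable (fun i : ℕ => Real.exp (-((((i:ℕ):ℝ))^2*v)/2)) := by
    refine (tail_bound ht0 ht1 (e := (0:ℝ)) (r := (1:ℝ)/2) (by norm_num)
      (fun i => (Real.exp_pos _).le) (fun i => ?_)).1
    rw [ht_def, exp_rpow]
    apply Real.exp_le_exp.2
    have hi : ((i:ℝ)) ≤ ((i:ℝ))^2 := by exact_mod_cast Nat.le_self_pow two_ne_zero i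
    nlinarith [hv.le]
  have hn_nat1 : Summable (fun i : ℕ => Real.exp (-((((i:ℕ):ℝ)+1)^2*v)/2)) := by
    refine (tail_bound ht0 ht1 (e := (0:ℝ)) (r := (1:ℝ)/2) (by norm_num)
      (fun i => (Real.exp_pos _).le) (fun i => ?_)).1
    rw [ht_def, exp_rpow]
    apply Real.exp_le_exp.2
    have hi : (0:ℝ) ≤ (i:ℝ) := Nat.cast_nonneg i
    nlinarith [sq_nonneg ((i:ℝ)), hv.le]
  have hn : Summable (fun n : ℤ => Real.exp (-((((n:ℤ):ℝ))^2*v)/2)) := by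
    refine Summable.of_nat_of_neg_add_one (hn_nat0.congr fun i => ?_) (hn_nat1.congr fun i => ?_)
      <;> (push_cast; ring_nf)
  have hH : Summable (fun p : ℤ × ℤ =>
      Real.exp (-((((p.1:ℤ):ℝ)+1/2)^2*u)/2) * Real.exp (-((((p.2:ℤ):ℝ))^2*v)/2)) :=
    hm.mul_of_nonneg hn (fun _ => (Real.exp_pos _).le) (fun _ => (Real.exp_pos _).le)
  have hFsum : Summable (Fr u v w) := by
    refine Summable.of_nonneg_of_le hFpos (fun p => ?_) hH
    exact key ((p.1:ℝ)+1/2) (p.2:ℝ)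
  refine ⟨hFsum, ?_⟩
  -- inner sums
  set inner : ℤ → ℝ := fun m => ∑' n : ℤ, Fr u v w (m, n) with hinner_def
  have hFub : ∑' p, Fr u v w p = ∑' m : ℤ, inner m :=
    Summable.tsum_prod' hFsum hFsum.prod_factor
  have hinner_nonneg : ∀ m, 0 ≤ inner m := fun m => tsum_nonneg (fun n => hFpos _)
  have hinner_summable : Summable inner := hFsum.prod
  have hsym : ∀ i : ℕ, inner (-((i:ℤ)+1)) = inner ((i:ℤ)) := by
    intro i
    have e1 := (Equiv.neg ℤ).tsum_eq (fun n => Fr u v w (-((i:ℤ)+1), n))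
    simp only [Equiv.neg_apply] at e1
    calc inner (-((i:ℤ)+1)) = ∑' n : ℤ, Fr u v w (-((i:ℤ)+1), -n) := e1.symm
      _ = ∑' n : ℤ, Fr u v w ((i:ℤ), n) := by
          refine tsum_congr fun n => ?_
          simp only [Fr]
          push_cast
          ring_nf
      _ = inner i := rfl
  have hnat : Summable (fun i : ℕ => inner ((i:ℤ))) :=
    hinner_summable.comp_injective (fun a b h => by exact_mod_cast h)
  have hneg : Summable (fun i : ℕ => inner (-((i:ℤ)+1))) :=
    hnat.congr fun i => (hsym i).symm
  have hsplit : ∑' m : ℤ, inner m = 2 * ∑' i : ℕ, inner ((i:ℤ)) := by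
    rw [tsum_of_nat_of_neg_add_one hnat hneg, tsum_congr hsym]
    ring
  -- splitting each row sum at n = 0
  set P : ℤ → ℕ → ℝ := fun m j => Fr u v w (m, (j:ℤ)+1) + Fr u v w (m, -((j:ℤ)+1)) with hP_def
  have inj1 : Function.Injective (fun j : ℕ => ((j:ℤ)+1)) := fun a b h => by
    simpa using h
  have inj2 : Function.Injective (fun j : ℕ => (-((j:ℤ)+1))) := fun a b h => by
    simp only [neg_inj] at h; simpa using h
  have hslice : ∀ m : ℤ, Summable (fun n : ℤ => Fr u v w (m, n)) := fun m => hFsum.prod_factor m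
  have hsl1 : ∀ m : ℤ, Summable (fun j : ℕ => Fr u v w (m, ((j:ℤ)+1))) := fun m =>
    ((hslice m).comp_injective inj1)
  have hsl2 : ∀ m : ℤ, Summable (fun j : ℕ => Fr u v w (m, -((j:ℤ)+1))) := fun m =>
    ((hslice m).comp_injective inj2)
  have hPsummable : ∀ m, Summable (P m) := fun m => (hsl1 m).add (hsl2 m)
  have hinner_eq : ∀ m : ℤ, inner m = Fr u v w (m, 0) + ∑' j : ℕ, P m j := by
    intro m
    have h1 : Summable (fun j : ℕ => Fr u v w (m, ((j:ℕ):ℤ))) :=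
      (hslice m).comp_injective (fun a b h => by exact_mod_cast h)
    have e1 : inner m = ∑' j : ℕ, Fr u v w (m, ((j:ℕ):ℤ)) + ∑' j : ℕ, Fr u v w (m, -((j:ℤ)+1)) :=
      tsum_of_nat_of_neg_add_one h1 (hsl2 m)
    have e2 : ∑' j : ℕ, Fr u v w (m, ((j:ℕ):ℤ)) =
        Fr u v w (m, 0) + ∑' j : ℕ, Fr u v w (m, ((j:ℤ)+1)) := by
      rw [Summable.tsum_eq_zero_add h1]
      norm_num
    rw [e1, e2, add_assoc, Summable.tsum_add (hsl1 m) (hsl2 m)]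
  -- geometric tail estimates
  have tb2 := tail_bound ht0 ht1 (show (0:ℝ) < 3 - 1/k by linarith)
    (f := fun j : ℕ => t ^ ((1 - 1/k) + (3 - 1/k) * (j:ℕ))) 
    (fun j => Real.rpow_nonneg ht0.le _) (fun j => le_refl _)
  have tb3 := tail_bound ht0 ht1 (show (0:ℝ) < 3 + 1/k by linarith)
    (f := fun j : ℕ => t ^ ((1 + 1/k) + (3 + 1/k) * (j:ℕ)))
    (fun j => Real.rpow_nonneg ht0.le _) (fun j => le_refl _)
  have tb6 := tail_bound ht0 ht1 (show (0:ℝ) < (3:ℝ)/2 by norm_num)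
    (f := fun j : ℕ => t ^ ((1:ℝ)/2 + (3:ℝ)/2 * (j:ℕ)))
    (fun j => Real.rpow_nonneg ht0.le _) (fun j => le_refl _)
  have tb7 := tail_bound ht0 ht1 (show (0:ℝ) < (9:ℝ)/2 by norm_num)
    (f := fun j : ℕ => t ^ ((3:ℝ)/2 + (9:ℝ)/2 * (j:ℕ)))
    (fun j => Real.rpow_nonneg ht0.le _) (fun j => le_refl _)
  have tbs1 := tail_bound hs0 hs1 (show (0:ℝ) < (4:ℝ) by norm_num)
    (f := fun i : ℕ => s ^ ((9:ℝ)/4 + (4:ℝ) * (i:ℕ)))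
    (fun i => Real.rpow_nonneg hs0.le _) (fun i => le_refl _)
  have tbs4 := tail_bound hs0 hs1 (show (0:ℝ) < (2:ℝ) by norm_num)
    (f := fun i : ℕ => s ^ ((9:ℝ)/8 + (2:ℝ) * (i:ℕ)))
    (fun i => Real.rpow_nonneg hs0.le _) (fun i => le_refl _)
  have tbs5 := tail_bound hs0 hs1 (show (0:ℝ) < (6:ℝ) by norm_num)
    (f := fun i : ℕ => s ^ ((27:ℝ)/8 + (6:ℝ) * (i:ℕ)))
    (fun i => Real.rpow_nonneg hs0.le _) (fun i => le_refl _)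
  -- bound for row m = 0
  have hw' : |w| ≤ v / k := by
    rw [le_div_iff₀ hk0]; linarith [hkw]
  have hP0 : ∀ j : ℕ, P 0 j ≤ Real.exp (-(u/4)) *
      (t ^ ((1 - 1/k) + (3 - 1/k) * (j:ℕ)) + t ^ ((1 + 1/k) + (3 + 1/k) * (j:ℕ))) := by
    intro j
    have e1 : P 0 j = Real.exp (-(u/4) - ((j:ℝ)+1)^2*v) *
        (Real.exp (-(((j:ℝ)+1) * w)) + Real.exp (((j:ℝ)+1) * w)) := by
      simp only [hP_def, Fr, mul_add, ← Real.exp_add]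
      congr 2 <;> push_cast <;> ring
    have hxC : |((j:ℝ)+1) * w| ≤ ((j:ℝ)+1) * (v/k) := by
      rw [_root_.abs_mul, _root_.abs_of_nonneg (by positivity : (0:ℝ) ≤ (j:ℝ)+1)]
      exact mul_le_mul_of_nonneg_left hw' (by positivity)
    have hj2 : ((j:ℝ)) ≤ ((j:ℝ))^2 := by exact_mod_cast Nat.le_self_pow two_ne_zero j
    have hrw : ((j:ℝ) + 1) * (v / k) = v * (1/k) + (j:ℝ) * v * (1/k) := by ring
    calc P 0 j ≤ Real.exp (-(u/4) - ((j:ℝ)+1)^2*v) *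
        (Real.exp (((j:ℝ)+1) * (v/k)) + Real.exp (-(((j:ℝ)+1) * (v/k)))) := by
          rw [e1]
          refine mul_le_mul_of_nonneg_left ?_ (Real.exp_pos _).le
          rw [add_comm]
          exact pair_exp hxC
      _ ≤ _ := by
          rw [mul_add, mul_add, ← Real.exp_add, ← Real.exp_add, ht_def, exp_rpow, exp_rpow,
            ← Real.exp_add, ← Real.exp_add]
          refine add_le_add (Real.exp_le_exp.2 ?_) (Real.exp_le_exp.2 ?_)
          · have h2 : -v * (1 - 1 / k + (3 - 1 / k) * (j:ℝ))
                = -v - 3*(j:ℝ)*v + v*(1/k) + (j:ℝ)*v*(1/k) := by ring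
            rw [hrw, h2]
            nlinarith [mul_nonneg hv.le (sub_nonneg.2 hj2)]
          · have h2 : -v * (1 + 1 / k + (3 + 1 / k) * (j:ℝ))
                = -v - 3*(j:ℝ)*v - v*(1/k) - (j:ℝ)*v*(1/k) := by ring
            rw [hrw, h2]
            nlinarith [mul_nonneg hv.le (sub_nonneg.2 hj2)]
  have hinner0 : inner 0 ≤ Real.exp (-(u/4)) *
      (1 + t ^ (1 - 1/k) / (1 - t ^ (3 - 1/k)) + t ^ (1 + 1/k) / (1 - t ^ (3 + 1/k))) := by
    rw [hinner_eq 0]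
    have hFr00 : Fr u v w (0, 0) = Real.exp (-(u/4)) := by
      simp only [Fr]
      norm_num
      ring_nf
    have hg : Summable (fun j : ℕ => Real.exp (-(u/4)) *
        (t ^ ((1 - 1/k) + (3 - 1/k) * (j:ℕ)) + t ^ ((1 + 1/k) + (3 + 1/k) * (j:ℕ)))) :=
      (tb2.1.add tb3.1).mul_left _
    have hPle := Summable.tsum_le_tsum hP0 (hPsummable 0) hg
    have e3 : ∑' j : ℕ, Real.exp (-(u/4)) *
        (t ^ ((1 - 1/k) + (3 - 1/k) * (j:ℕ)) + t ^ ((1 + 1/k) + (3 + 1/k) * (j:ℕ)))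
        = Real.exp (-(u/4)) * (∑' j : ℕ, t ^ ((1 - 1/k) + (3 - 1/k) * (j:ℕ))
          + ∑' j : ℕ, t ^ ((1 + 1/k) + (3 + 1/k) * (j:ℕ))) := by
      rw [tsum_mul_left, Summable.tsum_add tb2.1 tb3.1]
    rw [hFr00]
    have h22 := tb2.2
    have h32 := tb3.2
    rw [e3] at hPle
    nlinarith [Real.exp_pos (-(u/4)),
      tsum_nonneg (L := SummationFilter.unconditional ℕ) (fun j : ℕ => Real.rpow_nonneg ht0.le ((1 - 1/k) + (3 - 1/k) * (j:ℕ))),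
      tsum_nonneg (L := SummationFilter.unconditional ℕ) (fun j : ℕ => Real.rpow_nonneg ht0.le ((1 + 1/k) + (3 + 1/k) * (j:ℕ)))]
  -- bound for rows m = i+1, i : ℕ
  have hPi : ∀ (i j : ℕ), P ((i:ℤ)+1) j ≤
      s ^ ((9:ℝ)/8 + (2:ℝ)*(i:ℕ)) * t ^ ((1:ℝ)/2 + (3:ℝ)/2*(j:ℕ)) +
      s ^ ((27:ℝ)/8 + (6:ℝ)*(i:ℕ)) * t ^ ((3:ℝ)/2 + (9:ℝ)/2*(j:ℕ)) := by
    intro i j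
    have e1 : P ((i:ℤ)+1) j = Real.exp (-(((i:ℝ)+3/2)^2*u) - ((j:ℝ)+1)^2*v) *
        (Real.exp (-(2*((i:ℝ)+3/2)*((j:ℝ)+1)*w)) + Real.exp (2*((i:ℝ)+3/2)*((j:ℝ)+1)*w)) := by
      simp only [hP_def, Fr, mul_add, ← Real.exp_add]
      congr 2 <;> push_cast <;> ring
    have hC := cross_bound hu.le hv.le hw ((i:ℝ)+3/2) ((j:ℝ)+1)
    have habs : |(-(2*((i:ℝ)+3/2)*((j:ℝ)+1)*w))| ≤
        ((((i:ℝ)+3/2)^2*u + ((j:ℝ)+1)^2*v)/2) := by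
      rw [_root_.abs_neg]; exact hC
    have hi2 : ((i:ℝ)) ≤ ((i:ℝ))^2 := by exact_mod_cast Nat.le_self_pow two_ne_zero i
    have hj2 : ((j:ℝ)) ≤ ((j:ℝ))^2 := by exact_mod_cast Nat.le_self_pow two_ne_zero j
    calc P ((i:ℤ)+1) j ≤ Real.exp (-(((i:ℝ)+3/2)^2*u) - ((j:ℝ)+1)^2*v) *
        (Real.exp ((((i:ℝ)+3/2)^2*u + ((j:ℝ)+1)^2*v)/2) +
         Real.exp (-((((i:ℝ)+3/2)^2*u + ((j:ℝ)+1)^2*v)/2))) := by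
          rw [e1]
          have hp := pair_exp habs
          rw [neg_neg] at hp
          exact mul_le_mul_of_nonneg_left hp (Real.exp_pos _).le
      _ = Real.exp (-(((i:ℝ)+3/2)^2*u)/2 - ((j:ℝ)+1)^2*v/2) +
          Real.exp (-(3*(((i:ℝ)+3/2)^2*u))/2 - 3*(((j:ℝ)+1)^2*v)/2) := by
          rw [mul_add, ← Real.exp_add, ← Real.exp_add]
          congr 2 <;> ring
      _ ≤ _ := by
          rw [hs_def, ht_def, exp_rpow, exp_rpow, exp_rpow, exp_rpow,
            ← Real.exp_add, ← Real.exp_add]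
          refine add_le_add (Real.exp_le_exp.2 ?_) (Real.exp_le_exp.2 ?_)
          · nlinarith [mul_nonneg hu.le (sub_nonneg.2 hi2), mul_nonneg hv.le (sub_nonneg.2 hj2)]
          · nlinarith [mul_nonneg hu.le (sub_nonneg.2 hi2), mul_nonneg hv.le (sub_nonneg.2 hj2)]
  have hT6 : (0:ℝ) ≤ t ^ ((1:ℝ)/2) / (1 - t ^ ((3:ℝ)/2)) :=
    div_nonneg (Real.rpow_nonneg ht0.le _)
      (sub_nonneg.2 (Real.rpow_lt_one ht0.le ht1 (by norm_num)).le)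
  have hT7 : (0:ℝ) ≤ t ^ ((3:ℝ)/2) / (1 - t ^ ((9:ℝ)/2)) :=
    div_nonneg (Real.rpow_nonneg ht0.le _)
      (sub_nonneg.2 (Real.rpow_lt_one ht0.le ht1 (by norm_num)).le)
  have hinner_i : ∀ i : ℕ, inner ((i:ℤ)+1) ≤
      s ^ ((9:ℝ)/4 + (4:ℝ)*(i:ℕ)) +
      s ^ ((9:ℝ)/8 + (2:ℝ)*(i:ℕ)) * (t ^ ((1:ℝ)/2) / (1 - t ^ ((3:ℝ)/2))) +
      s ^ ((27:ℝ)/8 + (6:ℝ)*(i:ℕ)) * (t ^ ((3:ℝ)/2) / (1 - t ^ ((9:ℝ)/2))) := by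
    intro i
    rw [hinner_eq ((i:ℤ)+1)]
    have hi2 : ((i:ℝ)) ≤ ((i:ℝ))^2 := by exact_mod_cast Nat.le_self_pow two_ne_zero i
    have hFr0 : Fr u v w ((i:ℤ)+1, 0) ≤ s ^ ((9:ℝ)/4 + (4:ℝ)*(i:ℕ)) := by
      simp only [Fr]
      rw [hs_def, exp_rpow]
      apply Real.exp_le_exp.2
      push_cast
      nlinarith [mul_nonneg hu.le (sub_nonneg.2 hi2)]
    have hg : Summable (fun j : ℕ =>
        s ^ ((9:ℝ)/8 + (2:ℝ)*(i:ℕ)) * t ^ ((1:ℝ)/2 + (3:ℝ)/2*(j:ℕ)) +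
        s ^ ((27:ℝ)/8 + (6:ℝ)*(i:ℕ)) * t ^ ((3:ℝ)/2 + (9:ℝ)/2*(j:ℕ))) :=
      (tb6.1.mul_left _).add (tb7.1.mul_left _)
    have hPle := Summable.tsum_le_tsum (hPi i) (hPsummable _) hg
    have e3 : ∑' j : ℕ, (s ^ ((9:ℝ)/8 + (2:ℝ)*(i:ℕ)) * t ^ ((1:ℝ)/2 + (3:ℝ)/2*(j:ℕ)) +
        s ^ ((27:ℝ)/8 + (6:ℝ)*(i:ℕ)) * t ^ ((3:ℝ)/2 + (9:ℝ)/2*(j:ℕ)))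
        = s ^ ((9:ℝ)/8 + (2:ℝ)*(i:ℕ)) * ∑' j : ℕ, t ^ ((1:ℝ)/2 + (3:ℝ)/2*(j:ℕ)) +
          s ^ ((27:ℝ)/8 + (6:ℝ)*(i:ℕ)) * ∑' j : ℕ, t ^ ((3:ℝ)/2 + (9:ℝ)/2*(j:ℕ)) := by
      rw [Summable.tsum_add (tb6.1.mul_left _) (tb7.1.mul_left _), tsum_mul_left, tsum_mul_left]
    rw [e3] at hPle
    have b6 := mul_le_mul_of_nonneg_left tb6.2 (Real.rpow_nonneg hs0.le ((9:ℝ)/8 + (2:ℝ)*(i:ℕ)))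
    have b7 := mul_le_mul_of_nonneg_left tb7.2 (Real.rpow_nonneg hs0.le ((27:ℝ)/8 + (6:ℝ)*(i:ℕ)))
    linarith
  -- assembling
  have hnat1 : Summable (fun i : ℕ => inner ((i:ℤ)+1)) := by
    have h := (summable_nat_add_iff 1).2 hnat
    exact h.congr fun i => by push_cast; rfl
  have e0 : ∑' i : ℕ, inner ((i:ℕ):ℤ) = inner 0 + ∑' i : ℕ, inner ((i:ℤ)+1) := by
    rw [Summable.tsum_eq_zero_add hnat]
    congr 1
  have htail : ∑' i : ℕ, inner ((i:ℤ)+1) ≤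
      s ^ ((9:ℝ)/4) / (1 - s ^ (4:ℝ)) +
      s ^ ((9:ℝ)/8) / (1 - s ^ (2:ℝ)) * (t ^ ((1:ℝ)/2) / (1 - t ^ ((3:ℝ)/2))) +
      s ^ ((27:ℝ)/8) / (1 - s ^ (6:ℝ)) * (t ^ ((3:ℝ)/2) / (1 - t ^ ((9:ℝ)/2))) := by
    have hh : Summable (fun i : ℕ => s ^ ((9:ℝ)/4 + (4:ℝ)*(i:ℕ)) +
        s ^ ((9:ℝ)/8 + (2:ℝ)*(i:ℕ)) * (t ^ ((1:ℝ)/2) / (1 - t ^ ((3:ℝ)/2))) +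
        s ^ ((27:ℝ)/8 + (6:ℝ)*(i:ℕ)) * (t ^ ((3:ℝ)/2) / (1 - t ^ ((9:ℝ)/2)))) :=
      (tbs1.1.add (tbs4.1.mul_right _)).add (tbs5.1.mul_right _)
    refine (Summable.tsum_le_tsum (fun i => hinner_i i) hnat1 hh).trans ?_
    rw [Summable.tsum_add (tbs1.1.add (tbs4.1.mul_right _)) (tbs5.1.mul_right _),
      Summable.tsum_add tbs1.1 (tbs4.1.mul_right _), tsum_mul_right, tsum_mul_right]
    have b1 := tbs1.2
    have b4 := mul_le_mul_of_nonneg_right tbs4.2 hT6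
    have b5 := mul_le_mul_of_nonneg_right tbs5.2 hT7
    linarith
  rw [hFub, hsplit, e0]
  have exp14 : s ^ ((1:ℝ)/4) = Real.exp (-(u/4)) := by
    rw [hs_def, exp_rpow]
    congr 1
    ring
  have h94 : s ^ ((9:ℝ)/4) = s ^ ((1:ℝ)/4) * s ^ (2:ℝ) := by
    rw [← Real.rpow_add hs0]; norm_num
  have h98 : s ^ ((9:ℝ)/8) = s ^ ((1:ℝ)/4) * s ^ ((7:ℝ)/8) := by
    rw [← Real.rpow_add hs0]; norm_num
  have h278 : s ^ ((27:ℝ)/8) = s ^ ((1:ℝ)/4) * s ^ ((25:ℝ)/8) := by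
    rw [← Real.rpow_add hs0]; norm_num
  have hRHS : Real.exp (-(u/4)) * (1 + rho46 k s t) =
      Real.exp (-(u/4)) * (1 + t ^ (1 - 1/k) / (1 - t ^ (3 - 1/k)) +
        t ^ (1 + 1/k) / (1 - t ^ (3 + 1/k)))
      + (s ^ ((9:ℝ)/4) / (1 - s ^ (4:ℝ))
        + s ^ ((9:ℝ)/8) / (1 - s ^ (2:ℝ)) * (t ^ ((1:ℝ)/2) / (1 - t ^ ((3:ℝ)/2)))
        + s ^ ((27:ℝ)/8) / (1 - s ^ (6:ℝ)) * (t ^ ((3:ℝ)/2) / (1 - t ^ ((9:ℝ)/2)))) := by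
    rw [h94, h98, h278, ← exp14]
    simp only [rho46]
    rw [div_mul_div_comm, div_mul_div_comm]
    ring
  linarith [hinner0, htail]
/-- complex theta term -/
noncomputable def Tc (τ : Mat2) (β : ℤ) (p : ℤ × ℤ) : ℂ :=
  Complex.exp ((Real.pi : ℂ) * Complex.I *
    (((((p.1:ℝ)+1/2)^2 : ℝ) : ℂ) * τ 0 0 + (((2*((p.1:ℝ)+1/2)*(p.2:ℝ)) : ℝ) : ℂ) * τ 0 1 +
      ((((p.2:ℝ)^2) : ℝ) : ℂ) * τ 1 1 + ((((p.2:ℝ)*(β:ℝ)/2) : ℝ) : ℂ)))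

lemma abs_Tc (τ : Mat2) (β : ℤ) (p : ℤ × ℤ) :
    ‖Tc τ β p‖ = Fr (Real.pi * y1 τ) (Real.pi * y2 τ) (Real.pi * y3 τ) p := by
  rw [Tc, Complex.norm_exp, Fr]
  congr 1
  simp only [Complex.mul_re, Complex.mul_im, Complex.add_re, Complex.add_im, Complex.I_re,
    Complex.I_im, Complex.ofReal_re, Complex.ofReal_im, y1, y2, y3, z1, z2, z3]
  ring

lemma theta_eq (τ : Mat2) (hsym : τ 1 0 = τ 0 1) (β : ℤ) :
    theta ![1, 0] ![0, β] τ = ∑' p : ℤ × ℤ, Tc τ β p := by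
  rw [theta, ← (Equiv.tsum_eq (finTwoArrowEquiv ℤ).symm _)]
  refine tsum_congr fun p => ?_
  rw [Tc]
  congr 1
  simp only [finTwoArrowEquiv_symm_apply, Equiv.coe_fn_symm_mk, Fin.sum_univ_two, Matrix.cons_val_zero,
    Matrix.cons_val_one, Matrix.head_cons, hsym]
  push_cast
  ring


lemma split_pair {ι G : Type*} [DecidableEq ι] [AddCommGroup G] [TopologicalSpace G]
    [IsTopologicalAddGroup G] {f : ι → G} (hf : Summable f) {b1 b2 : ι} (hne : b1 ≠ b2) :
    HasSum (fun x => if x = b1 ∨ x = b2 then 0 else f x) ((∑' x, f x) - f b1 - f b2) := by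
  have h1 : HasSum (fun x => if x = b1 then f b1 else 0) (f b1) := hasSum_ite_eq b1 (f b1)
  have h2 : HasSum (fun x => if x = b2 then f b2 else 0) (f b2) := hasSum_ite_eq b2 (f b2)
  have h := (hf.hasSum.sub h1).sub h2
  have hfun : (fun x => if x = b1 ∨ x = b2 then 0 else f x) =
      fun x => (f x - if x = b1 then f b1 else 0) - if x = b2 then f b2 else 0 := by
    funext x
    by_cases hx1 : x = b1
    · subst hx1
      simp [hne]
    · by_cases hx2 : x = b2
      · subst hx2
        simp [hx1]
      · simp [hx1, hx2]
  rw [hfun]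
  exact h


lemma core (k : ℝ) (hk : 1 ≤ k) (τ : Mat2) (hτ : inH2 τ)
    (h1 : y3 τ ^ 2 ≤ 1/4 * y1 τ * y2 τ) (h2 : k * |y3 τ| ≤ y2 τ) (β : ℤ) :
    ‖theta ![1,0] ![0,β] τ / xi46 τ - 1‖ ≤ rho46 k (q1 τ) (q2 τ) := by
  obtain ⟨hsymm, hpos⟩ := hτ
  have hsym : τ 1 0 = τ 0 1 := by
    have := congrFun (congrFun hsymm 0) 1
    simpa [Matrix.transpose] using this
  have hy1 : 0 < y1 τ := by
    have := hpos.dotProduct_mulVec_pos (x := fun i => if i = 0 then 1 else 0) (by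
      intro h
      have := congrFun h 0
      simp at this)
    simpa [Matrix.mulVec, dotProduct, Fin.sum_univ_two, y1, z1] using this
  have hy2 : 0 < y2 τ := by
    have := hpos.dotProduct_mulVec_pos (x := fun i => if i = 1 then 1 else 0) (by
      intro h
      have := congrFun h 1
      simp at this)
    simpa [Matrix.mulVec, dotProduct, Fin.sum_univ_two, y2, z2] using this
  have hπ := Real.pi_pos
  set u := Real.pi * y1 τ with hu_def
  set v := Real.pi * y2 τ with hv_def
  set w := Real.pi * y3 τ with hw_def
  have hu : 0 < u := by positivity
  have hv : 0 < v := by positivity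
  have hw4 : 4 * w^2 ≤ u * v := by
    rw [hu_def, hv_def, hw_def]
    have hh := mul_le_mul_of_nonneg_left h1 (le_of_lt (mul_pos hπ hπ))
    nlinarith [hh]
  have hkw : k * |w| ≤ v := by
    rw [hw_def, _root_.abs_mul, abs_of_pos hπ, hv_def]
    calc k * (Real.pi * |y3 τ|) = Real.pi * (k * |y3 τ|) := by ring
      _ ≤ Real.pi * y2 τ := by
          exact mul_le_mul_of_nonneg_left h2 hπ.le
  obtain ⟨hFsum, hFle⟩ := main_real hk hu hv hw4 hkw
  have hq1 : q1 τ = Real.exp (-u) := by rw [q1, hu_def]; congr 1; ring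
  have hq2 : q2 τ = Real.exp (-v) := by rw [q2, hv_def]; congr 1; ring
  have habs : ∀ p, ‖Tc τ β p‖ = Fr u v w p := abs_Tc τ β
  have hgsum : Summable (Tc τ β) := by
    refine Summable.of_norm ?_
    refine hFsum.congr fun p => ?_
    rw [← habs p]
  have htheta := theta_eq τ hsym β
  have hval1 : Tc τ β (0, 0) = Complex.exp ((Real.pi : ℂ) * Complex.I * z1 τ / 4) := by
    rw [Tc, z1]
    congr 1
    push_cast
    ring
  have hval2 : Tc τ β (-1, 0) = Complex.exp ((Real.pi : ℂ) * Complex.I * z1 τ / 4) := by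
    rw [Tc, z1]
    congr 1
    push_cast
    ring
  have hxi : xi46 τ = Tc τ β (0, 0) + Tc τ β (-1, 0) := by
    rw [hval1, hval2, xi46]
    ring
  have hFr00 : Fr u v w (0, 0) = Real.exp (-(u/4)) := by
    rw [Fr]
    norm_num
    ring_nf
  have hFr10 : Fr u v w (-1, 0) = Real.exp (-(u/4)) := by
    rw [Fr]
    norm_num
    ring_nf
  have hxiabs : ‖xi46 τ‖ = 2 * Real.exp (-(u/4)) := by
    rw [xi46, norm_mul, ← hval1, habs, hFr00]
    norm_num
  have hxine : xi46 τ ≠ 0 := by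
    rw [xi46]
    exact mul_ne_zero two_ne_zero (Complex.exp_ne_zero _)
  have hne : ((0,0) : ℤ × ℤ) ≠ (-1,0) := by
    intro h
    have := congrArg Prod.fst h
    norm_num at this
  have splitC := split_pair hgsum hne
  have splitR := split_pair hFsum hne
  have hdiff : theta ![1,0] ![0,β] τ - xi46 τ =
      ∑' x : ℤ × ℤ, (if x = (0,0) ∨ x = (-1,0) then 0 else Tc τ β x) := by
    rw [splitC.tsum_eq, htheta, hxi]
    ring
  have hbound : ‖theta ![1,0] ![0,β] τ - xi46 τ‖ ≤
      (∑' p, Fr u v w p) - Fr u v w (0,0) - Fr u v w (-1,0) := by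
    rw [hdiff]
    refine tsum_of_norm_bounded splitR fun x => ?_
    by_cases hx : x = (0,0) ∨ x = (-1,0)
    · rw [if_pos hx, if_pos hx]
      simp
    · rw [if_neg hx, if_neg hx, habs x]
  have hfinal : ‖theta ![1,0] ![0,β] τ - xi46 τ‖ ≤
      rho46 k (Real.exp (-u)) (Real.exp (-v)) * ‖xi46 τ‖ := by
    rw [hxiabs]
    rw [hFr00, hFr10] at hbound
    nlinarith [Real.exp_pos (-(u/4))]
  rw [div_sub_one hxine, norm_div, div_le_iff₀ (by rw [hxiabs]; positivity : 0 < ‖xi46 τ‖), hq1, hq2]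
  exact hfinal

lemma idx4 (τ : Mat2) : thetaIdx 4 τ = theta ![1,0] ![0,(0:ℤ)] τ := by
  rw [thetaIdx]
  norm_num

lemma idx6 (τ : Mat2) : thetaIdx 6 τ = theta ![1,0] ![0,(1:ℤ)] τ := by
  rw [thetaIdx]
  norm_num

end Aux7

/-- Estimate on θ₄ and θ₆. -/
theorem stmt_7 (k : ℝ) (hk : 1 ≤ k) (τ : Mat2) (hτ : inH2 τ)
    (h1 : y3 τ ^ 2 ≤ 1/4 * y1 τ * y2 τ) (h2 : k * |y3 τ| ≤ y2 τ) :
    ∀ j ∈ ({4, 6} : Set ℕ),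
      ‖thetaIdx j τ / xi46 τ - 1‖ ≤ rho46 k (q1 τ) (q2 τ) := by
  intro j hj
  rcases hj with hj | hj
  · subst hj
    rw [Aux7.idx4]
    exact Aux7.core k hk τ hτ h1 h2 0
  · rw [Set.mem_singleton_iff] at hj
    subst hj
    rw [Aux7.idx6]
    exact Aux7.core k hk τ hτ h1 h2 1
end
end

section
/- Let k ≥ 1 be a real number and let τ ∈ ℋ₂ satisfy y₃(τ)² ≤ (1/4)·y₁(τ)·y₂(τ) and k·|y₃(τ)| ≤ y₁(τ). Then for j ∈ {8,9}, |θ_j(τ)/ξ_{8,9}(τ) − 1| ≤ ρ_{8,9}^{(k)}(q₁(τ), q₂(τ)). -/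
open Complex

noncomputable section

lemma expRpow (x y : ℝ) : Real.exp x ^ (y : ℝ) = Real.exp (x * y) := by
  rw [← Real.exp_log (Real.exp_pos x)] ; rw [Real.log_exp, ← Real.exp_mul]

lemma pair_le {x y m : ℝ} (hx : m ≤ x) (hy : m ≤ y) :
    Real.exp (-x) + Real.exp (-y) ≤ Real.exp (-m) + Real.exp (-(x + y - m)) := by
  have e1 : Real.exp (-x) = Real.exp (-m) * Real.exp (m - x) := by
    rw [← Real.exp_add]; ring_nf
  have e2 : Real.exp (-y) = Real.exp (-m) * Real.exp (m - y) := by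
    rw [← Real.exp_add]; ring_nf
  have e3 : Real.exp (-(x + y - m)) = Real.exp (-m) * (Real.exp (m - x) * Real.exp (m - y)) := by
    rw [← Real.exp_add, ← Real.exp_add]; ring_nf
  have t1 : Real.exp (m - x) ≤ 1 := Real.exp_le_one_iff.mpr (by linarith)
  have t2 : Real.exp (m - y) ≤ 1 := Real.exp_le_one_iff.mpr (by linarith)
  rw [e1, e2, e3]
  have key : (0:ℝ) ≤ (1 - Real.exp (m - x)) * (1 - Real.exp (m - y)) :=
    mul_nonneg (by linarith) (by linarith)
  nlinarith [Real.exp_pos (-m)]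

lemma pair_le' {t x y m : ℝ} (ht : 0 < t) (hx : m ≤ x) (hy : m ≤ y) :
    Real.exp (-(t*x)) + Real.exp (-(t*y)) ≤ Real.exp (-(t*m)) + Real.exp (-(t*(x + y - m))) := by
  have h := pair_le (x := t*x) (y := t*y) (m := t*m)
    (by nlinarith) (by nlinarith)
  have e : t*x + t*y - t*m = t*(x+y-m) := by ring
  rwa [e] at h

lemma amgm {A B C m ν : ℝ} (hA : 0 < A) (hB : 0 < B) (h1 : C^2 ≤ 1/4*A*B) :
    (m^2*A + ν^2*B)/2 ≤ m^2*A + 2*m*ν*C + ν^2*B := by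
  nlinarith [sq_nonneg (m^2*A - ν^2*B), sq_nonneg (m*ν), sq_nonneg (m^2*A + ν^2*B + 4*m*ν*C),
    mul_nonneg (mul_nonneg (sq_nonneg m) hA.le) (mul_nonneg (sq_nonneg ν) hB.le),
    mul_nonneg (sq_nonneg m) hA.le, mul_nonneg (sq_nonneg ν) hB.le]

section quad
variable {t a b c : ℝ}

lemma quad_term_le (ht : 0 < t) (ha : 0 ≤ a) (j : ℕ) :
    Real.exp (-(t * (a * j^2 + b * j + c))) ≤
      Real.exp (-(t*c)) * Real.exp (-(t*(a+b))) ^ j := by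
  rw [← Real.exp_nat_mul, ← Real.exp_add]
  apply Real.exp_le_exp.mpr
  have hj : (j:ℝ) ≤ (j:ℝ)^2 := by
    rcases Nat.eq_zero_or_pos j with h | h
    · simp [h]
    · have : (1:ℝ) ≤ (j:ℝ) := by exact_mod_cast h
      nlinarith
  nlinarith [mul_nonneg ht.le (mul_nonneg ha (sub_nonneg.mpr hj))]

lemma summable_quad (ht : 0 < t) (ha : 0 ≤ a) (hd : 0 < a + b) :
    Summable (fun j : ℕ => Real.exp (-(t * (a * j^2 + b * j + c)))) := by
  refine Summable.of_nonneg_of_le (fun j => (Real.exp_pos _).le) (quad_term_le ht ha)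
    (Summable.mul_left _ ?_)
  exact summable_geometric_of_lt_one (Real.exp_pos _).le
    (Real.exp_lt_one_iff.mpr (by nlinarith))

lemma tsum_quad_le (ht : 0 < t) (ha : 0 ≤ a) (hd : 0 < a + b) :
    (∑' j : ℕ, Real.exp (-(t * (a * j^2 + b * j + c)))) ≤
      Real.exp (-(t*c)) / (1 - Real.exp (-(t*(a+b)))) := by
  have hr0 : (0:ℝ) ≤ Real.exp (-(t*(a+b))) := (Real.exp_pos _).le
  have hr1 : Real.exp (-(t*(a+b))) < 1 := Real.exp_lt_one_iff.mpr (by nlinarith)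
  calc (∑' j : ℕ, Real.exp (-(t * (a * j^2 + b * j + c))))
      ≤ ∑' j : ℕ, Real.exp (-(t*c)) * Real.exp (-(t*(a+b))) ^ j :=
        Summable.tsum_le_tsum (quad_term_le ht ha) (summable_quad ht ha hd)
          (Summable.mul_left _ (summable_geometric_of_lt_one hr0 hr1))
    _ = Real.exp (-(t*c)) * (1 - Real.exp (-(t*(a+b))))⁻¹ := by
        rw [tsum_mul_left, tsum_geometric_of_lt_one hr0 hr1]
    _ = _ := (div_eq_mul_inv _ _).symm

lemma quad_nonneg_tsum : 0 ≤ ∑' j : ℕ, Real.exp (-(t * (a * j^2 + b * j + c))) :=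
  tsum_nonneg fun j => (Real.exp_pos _).le

end quad


/-- exponent of the absolute value of a theta term -/
def EE (A B C : ℝ) (p : ℤ × ℤ) : ℝ :=
  (p.1:ℝ)^2*A + 2*(p.1:ℝ)*((p.2:ℝ)+1/2)*C + ((p.2:ℝ)+1/2)^2*B

/-- the theta term -/
def fT (τ : Mat2) (b0 : ℤ) (p : ℤ × ℤ) : ℂ :=
  Complex.exp ((Real.pi : ℂ) * Complex.I *
    ((((p.1:ℝ)^2 : ℝ) : ℂ) * z1 τ + ((2*(p.1:ℝ)*((p.2:ℝ)+1/2) : ℝ) : ℂ) * z3 τ +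
      ((((p.2:ℝ)+1/2)^2 : ℝ) : ℂ) * z2 τ + (((p.1:ℝ) * (b0:ℝ) / 2 : ℝ) : ℂ)))

lemma abs_fT (τ : Mat2) (b0 : ℤ) (p : ℤ × ℤ) :
    ‖fT τ b0 p‖ = Real.exp (-(Real.pi * EE (y1 τ) (y2 τ) (y3 τ) p)) := by
  rw [fT, Complex.norm_exp]
  congr 1
  simp only [Complex.mul_re, Complex.mul_im, Complex.add_re, Complex.add_im, Complex.I_re,
    Complex.I_im, Complex.ofReal_re, Complex.ofReal_im, EE]
  have e1 : (z1 τ).im = y1 τ := rfl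
  have e2 : (z2 τ).im = y2 τ := rfl
  have e3 : (z3 τ).im = y3 τ := rfl
  rw [e1, e2, e3]
  ring

lemma theta_eq (τ : Mat2) (hs : τ 1 0 = τ 0 1) (b0 : ℤ) :
    theta ![0, 1] ![b0, 0] τ = ∑' p : ℤ × ℤ, fT τ b0 p := by
  rw [theta, ← (finTwoArrowEquiv ℤ).symm.tsum_eq]
  apply tsum_congr
  intro p
  rw [fT]
  congr 1
  simp only [finTwoArrowEquiv_symm_apply, Fin.sum_univ_two, Matrix.cons_val_zero,
    Matrix.cons_val_one, Matrix.head_cons, Fin.isValue, z1, z2, z3, hs]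
  push_cast
  ring

lemma xi_eq (τ : Mat2) (b0 : ℤ) : xi89 τ = fT τ b0 (0,0) + fT τ b0 (0,-1) := by
  have h00 : fT τ b0 (0,0) = Complex.exp ((Real.pi:ℂ) * Complex.I * z2 τ / 4) := by
    rw [fT]; congr 1; push_cast; ring_nf
  have h01 : fT τ b0 (0,-1) = Complex.exp ((Real.pi:ℂ) * Complex.I * z2 τ / 4) := by
    rw [fT]; congr 1; push_cast; ring_nf
  rw [xi89, h00, h01, two_mul]


lemma summable_geom_natAbs {x : ℝ} (h0 : 0 ≤ x) (h1 : x < 1) :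
    Summable (fun m : ℤ => x ^ m.natAbs) := by
  apply Summable.of_nat_of_neg
  · simpa using summable_geometric_of_lt_one h0 h1
  · simpa using summable_geometric_of_lt_one h0 h1

lemma natAbs_le_sq (m : ℤ) : ((m.natAbs : ℝ)) ≤ ((m:ℝ))^2 := by
  have h : ((m.natAbs:ℝ))^2 = ((m:ℝ))^2 := by
    rw [Nat.cast_natAbs]; push_cast; rw [_root_.sq_abs]
  rcases Nat.eq_zero_or_pos m.natAbs with h0 | h0
  · simp [h0] at h ⊢ ; nlinarith [sq_nonneg ((m:ℝ))]
  · have : (1:ℝ) ≤ (m.natAbs:ℝ) := by exact_mod_cast h0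
    nlinarith
lemma natAbs_half_le (n : ℤ) : ((n.natAbs : ℝ))/2 - 1 ≤ ((n:ℝ)+1/2)^2 := by
  have habs : ((n.natAbs:ℝ)) = |(n:ℝ)| := by rw [Nat.cast_natAbs]; push_cast; ring
  nlinarith [_root_.sq_abs ((n:ℝ)), le_abs_self ((n:ℝ)), neg_abs_le ((n:ℝ)),
    sq_nonneg (|(n:ℝ)| - 3/2), abs_nonneg ((n:ℝ))]

lemma EE_lb {A B C : ℝ} (hA : 0 < A) (hB : 0 < B) (h1 : C^2 ≤ 1/4*A*B) (p : ℤ × ℤ) :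
    (((p.1:ℝ))^2*A + (((p.2:ℝ))+1/2)^2*B)/2 ≤ EE A B C p :=
  amgm hA hB h1

lemma summable_absfT {A B C : ℝ} (hA : 0 < A) (hB : 0 < B) (h1 : C^2 ≤ 1/4*A*B) :
    Summable (fun p : ℤ × ℤ => Real.exp (-(Real.pi * EE A B C p))) := by
  have hπ := Real.pi_pos
  have hx1 : Real.exp (-(Real.pi*A/2)) < 1 := Real.exp_lt_one_iff.mpr (by nlinarith)
  have hy1 : Real.exp (-(Real.pi*B/4)) < 1 := Real.exp_lt_one_iff.mpr (by nlinarith)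
  refine Summable.of_nonneg_of_le (f := fun p : ℤ × ℤ =>
      Real.exp (Real.pi*B/2) * (Real.exp (-(Real.pi*A/2)) ^ p.1.natAbs *
        Real.exp (-(Real.pi*B/4)) ^ p.2.natAbs))
    (fun p => (Real.exp_pos _).le) ?_ ?_
  · intro p
    beta_reduce
    rw [← Real.exp_nat_mul, ← Real.exp_nat_mul, ← Real.exp_add, ← Real.exp_add]
    apply Real.exp_le_exp.mpr
    have hq := EE_lb hA hB h1 p
    have hm := natAbs_le_sq p.1
    have hn := natAbs_half_le p.2
    have hEE : (p.1.natAbs:ℝ)*A/2 + ((p.2.natAbs:ℝ)/2 - 1)*B/2 ≤ EE A B C p := by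
      nlinarith [mul_le_mul_of_nonneg_right hm hA.le, mul_le_mul_of_nonneg_right hn hB.le]
    nlinarith
  · have hs1 : Summable (fun m : ℤ => Real.exp (-(Real.pi*A/2)) ^ m.natAbs) :=
      summable_geom_natAbs (Real.exp_pos _).le hx1
    have hs2 : Summable (fun n : ℤ => Real.exp (-(Real.pi*B/4)) ^ n.natAbs) :=
      summable_geom_natAbs (Real.exp_pos _).le hy1
    have := (hs1.mul_of_nonneg hs2
      (fun m => pow_nonneg (Real.exp_pos _).le _) (fun n => pow_nonneg (Real.exp_pos _).le _))
    exact this.mul_left _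

/-- theta terms with the two principal terms removed -/
def GG (A B C : ℝ) (p : ℤ × ℤ) : ℝ :=
  if p = ((0:ℤ),(0:ℤ)) ∨ p = ((0:ℤ),(-1:ℤ)) then 0 else Real.exp (-(Real.pi * EE A B C p))

lemma GG_nonneg (A B C : ℝ) (p : ℤ × ℤ) : 0 ≤ GG A B C p := by
  rw [GG]; split_ifs
  · exact le_rfl
  · exact (Real.exp_pos _).le

lemma GG_le (A B C : ℝ) (p : ℤ × ℤ) : GG A B C p ≤ Real.exp (-(Real.pi * EE A B C p)) := by
  rw [GG]; split_ifs
  · exact (Real.exp_pos _).le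
  · exact le_rfl

lemma summable_GG {A B C : ℝ} (hA : 0 < A) (hB : 0 < B) (h1 : C^2 ≤ 1/4*A*B) :
    Summable (GG A B C) :=
  Summable.of_nonneg_of_le (GG_nonneg A B C) (GG_le A B C) (summable_absfT hA hB h1)

lemma exp_split2 (u v : ℝ) : Real.exp (-(u+v)) = Real.exp (-u) * Real.exp (-v) := by
  rw [← Real.exp_add]; ring_nf

lemma pair0_bound {k A B C : ℝ} (hk : 1 ≤ k) (hA : 0 < A) (hB : 0 < B)
    (h2 : k*|C| ≤ A) (i : ℕ) :
    Real.exp (-(Real.pi * EE A B C (((i:ℤ)+1), 0))) +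
      Real.exp (-(Real.pi * EE A B C (((i:ℤ)+1), -1))) ≤
    Real.exp (-(Real.pi*B/4)) * Real.exp (-(Real.pi*A*(1*i^2+(2-1/k)*i+(1-1/k))))
      + Real.exp (-(Real.pi*B/4)) * Real.exp (-(Real.pi*A*(1*i^2+(2+1/k)*i+(1+1/k)))) := by
  have hπ := Real.pi_pos
  have hk0 : (0:ℝ) < k := by linarith
  have hCA : |C| ≤ 1/k * A := by
    rw [one_div, inv_mul_eq_div, le_div_iff₀ hk0]
    linarith [h2, mul_comm k |C|]
  set M : ℝ := (i:ℝ)+1 with hM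
  have hM0 : 0 ≤ M := by positivity
  have ex : EE A B C (((i:ℤ)+1), 0) = M^2*A + M*C + B/4 := by
    rw [EE]; push_cast; ring
  have ey : EE A B C (((i:ℤ)+1), -1) = M^2*A - M*C + B/4 := by
    rw [EE]; push_cast; ring
  have hMC1 : M*(-|C|) ≤ M*C := mul_le_mul_of_nonneg_left (neg_abs_le C) hM0
  have hMC2 : M*(-|C|) ≤ M*(-C) := mul_le_mul_of_nonneg_left (by
    simpa using neg_abs_le (-C)) hM0
  have hMC3 : M*|C| ≤ M*(1/k*A) := mul_le_mul_of_nonneg_left hCA hM0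
  have hxlb : M^2*A - M*(1/k)*A + B/4 ≤ M^2*A + M*C + B/4 := by nlinarith
  have hylb : M^2*A - M*(1/k)*A + B/4 ≤ M^2*A - M*C + B/4 := by nlinarith
  have h := pair_le' (t := Real.pi) hπ hxlb hylb
  rw [ex, ey]
  calc Real.exp (-(Real.pi * (M^2*A + M*C + B/4))) + Real.exp (-(Real.pi * (M^2*A - M*C + B/4)))
      ≤ Real.exp (-(Real.pi * (M^2*A - M*(1/k)*A + B/4))) +
        Real.exp (-(Real.pi * ((M^2*A + M*C + B/4) + (M^2*A - M*C + B/4) -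
          (M^2*A - M*(1/k)*A + B/4)))) := h
    _ = _ := by
        rw [show -(Real.pi * (M^2*A - M*(1/k)*A + B/4)) =
          -(Real.pi*B/4 + Real.pi*A*(1*i^2+(2-1/k)*i+(1-1/k))) by rw [hM]; ring,
          show -(Real.pi * ((M^2*A + M*C + B/4) + (M^2*A - M*C + B/4) -
            (M^2*A - M*(1/k)*A + B/4))) =
          -(Real.pi*B/4 + Real.pi*A*(1*i^2+(2+1/k)*i+(1+1/k))) by rw [hM]; ring,
          exp_split2, exp_split2]

lemma pairj_bound {A B C : ℝ} (hA : 0 < A) (hB : 0 < B)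
    (h1 : C^2 ≤ 1/4*A*B) (i j : ℕ) :
    Real.exp (-(Real.pi * EE A B C (((i:ℤ)+1), (j:ℤ)+1))) +
      Real.exp (-(Real.pi * EE A B C (((i:ℤ)+1), -((j:ℤ)+2)))) ≤
    Real.exp (-(Real.pi*B/4)) * Real.exp (-(Real.pi*A*((1/2)*i^2+1*i+1/2))) *
        Real.exp (-(Real.pi*B*((1/2)*j^2+(3/2)*j+7/8)))
      + Real.exp (-(Real.pi*B/4)) * Real.exp (-(Real.pi*A*((3/2)*i^2+3*i+3/2))) *
        Real.exp (-(Real.pi*B*((3/2)*j^2+(9/2)*j+25/8))) := by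
  have hπ := Real.pi_pos
  set M : ℝ := (i:ℝ)+1 with hM
  set ν : ℝ := (j:ℝ)+3/2 with hν
  have ex : EE A B C (((i:ℤ)+1), (j:ℤ)+1) = M^2*A + 2*M*ν*C + ν^2*B := by
    rw [EE]; push_cast; ring
  have ey : EE A B C (((i:ℤ)+1), -((j:ℤ)+2)) = M^2*A - 2*M*ν*C + ν^2*B := by
    rw [EE]; push_cast; ring
  have hxlb : (M^2*A + ν^2*B)/2 ≤ M^2*A + 2*M*ν*C + ν^2*B :=
    amgm hA hB h1
  have hylb : (M^2*A + ν^2*B)/2 ≤ M^2*A - 2*M*ν*C + ν^2*B := by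
    have := amgm (m := M) (ν := -ν) hA hB h1
    nlinarith [this]
  have h := pair_le' (t := Real.pi) hπ hxlb hylb
  rw [ex, ey]
  calc Real.exp (-(Real.pi * (M^2*A + 2*M*ν*C + ν^2*B))) +
        Real.exp (-(Real.pi * (M^2*A - 2*M*ν*C + ν^2*B)))
      ≤ Real.exp (-(Real.pi * ((M^2*A + ν^2*B)/2))) +
        Real.exp (-(Real.pi * ((M^2*A + 2*M*ν*C + ν^2*B) + (M^2*A - 2*M*ν*C + ν^2*B) -
          (M^2*A + ν^2*B)/2))) := h
    _ = _ := by
        rw [show -(Real.pi * ((M^2*A + ν^2*B)/2)) =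
          -((Real.pi*B/4 + Real.pi*A*((1/2)*i^2+1*i+1/2)) +
            Real.pi*B*((1/2)*j^2+(3/2)*j+7/8)) by rw [hM, hν]; ring,
          show -(Real.pi * ((M^2*A + 2*M*ν*C + ν^2*B) + (M^2*A - 2*M*ν*C + ν^2*B) -
            (M^2*A + ν^2*B)/2)) =
          -((Real.pi*B/4 + Real.pi*A*((3/2)*i^2+3*i+3/2)) +
            Real.pi*B*((3/2)*j^2+(9/2)*j+25/8)) by rw [hM, hν]; ring,
          exp_split2, exp_split2, exp_split2, exp_split2]

lemma GG_ne {A B C : ℝ} (p : ℤ × ℤ) (hp : p.1 ≠ 0) :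
    GG A B C p = Real.exp (-(Real.pi * EE A B C p)) := by
  rcases p with ⟨m, n⟩
  rw [GG, if_neg]
  rintro (h | h) <;> (rw [Prod.ext_iff] at h; exact hp h.1)

lemma GG_zero {A B C : ℝ} (n : ℤ) (hn : n ≠ 0 ∧ n ≠ -1) :
    GG A B C (0, n) = Real.exp (-(Real.pi * EE A B C (0, n))) := by
  rw [GG, if_neg]
  rintro (h | h) <;> (rw [Prod.ext_iff] at h; simp at h; omega)

set_option maxHeartbeats 2000000 in
lemma main_est {k A B C : ℝ} (hk : 1 ≤ k) (hA : 0 < A) (hB : 0 < B)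
    (h1 : C^2 ≤ 1/4*A*B) (h2 : k*|C| ≤ A) :
    ∑' p : ℤ × ℤ, GG A B C p ≤
      2 * Real.exp (-(Real.pi*B/4)) *
        rho89 k (Real.exp (-Real.pi*A)) (Real.exp (-Real.pi*B)) := by
  classical
  have hπ := Real.pi_pos
  have hk0 : (0:ℝ) < k := by linarith
  have hπA : 0 < Real.pi * A := by positivity
  have hπB : 0 < Real.pi * B := by positivity
  have hG := summable_GG hA hB h1
  set cB : ℝ := Real.exp (-(Real.pi*B/4)) with hcB
  have hcB0 : 0 < cB := Real.exp_pos _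
  -- the paired sums over rows
  set P : ℤ → ℝ := fun m => ∑' j : ℕ, (GG A B C (m, (j:ℤ)) + GG A B C (m, -((j:ℤ)+1))) with hPdef
  have hGm : ∀ m : ℤ, Summable (fun n : ℤ => GG A B C (m, n)) := fun m => hG.prod_factor m
  have hPm : ∀ m : ℤ, (∑' n : ℤ, GG A B C (m, n)) = P m := fun m =>
    (tsum_nat_add_neg_add_one (hGm m)).symm
  have htot : ∑' p : ℤ × ℤ, GG A B C p = ∑' m : ℤ, P m := by
    rw [Summable.tsum_prod hG]; exact tsum_congr hPm
  have hPsummable : Summable P := hG.prod.congr hPm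
  have hPpair : ∀ m : ℤ, Summable (fun j : ℕ =>
      GG A B C (m, (j:ℤ)) + GG A B C (m, -((j:ℤ)+1))) := fun m =>
    (hGm m).nat_add_neg_add_one
  have hPnonneg : ∀ m, 0 ≤ P m := fun m =>
    tsum_nonneg fun j => add_nonneg (GG_nonneg _ _ _ _) (GG_nonneg _ _ _ _)
  -- symmetry P (-(i+1)) = P (i+1)
  have hPsym : ∀ i : ℕ, P (-((i:ℤ)+1)) = P ((i:ℤ)+1) := by
    intro i
    apply tsum_congr; intro j
    have hne : ((i:ℤ)+1) ≠ 0 := by omega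
    have hne' : (-((i:ℤ)+1)) ≠ 0 := by omega
    rw [GG_ne (-((i:ℤ)+1), (j:ℤ)) hne', GG_ne (-((i:ℤ)+1), -((j:ℤ)+1)) hne',
        GG_ne (((i:ℤ)+1), (j:ℤ)) hne, GG_ne (((i:ℤ)+1), -((j:ℤ)+1)) hne]
    have e1 : EE A B C (-((i:ℤ)+1), (j:ℤ)) = EE A B C (((i:ℤ)+1), -((j:ℤ)+1)) := by
      rw [EE, EE]; push_cast; ring
    have e2 : EE A B C (-((i:ℤ)+1), -((j:ℤ)+1)) = EE A B C (((i:ℤ)+1), (j:ℤ)) := by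
      rw [EE, EE]; push_cast; ring
    rw [e1, e2]; ring
  have hinj : Function.Injective (fun i : ℕ => (i:ℤ)+1) := by
    intro a b h; simpa using h
  have hs1 : Summable (fun i : ℕ => P ((i:ℤ)+1)) := hPsummable.comp_injective hinj
  have hs2 : Summable (fun i : ℕ => P (-((i:ℤ)+1))) := hs1.congr (fun i => (hPsym i).symm)
  have hsplit : ∑' m : ℤ, P m = P 0 + 2 * ∑' i : ℕ, P ((i:ℤ)+1) := by
    rw [tsum_of_add_one_of_neg_add_one hs1 hs2, tsum_congr hPsym]
    ring
  have hκ1 : 1/k ≤ 1 := by rw [div_le_one hk0]; exact hk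
  have hκ0 : 0 < 1/k := by positivity
  -- constants
  set Sb : ℝ := ∑' j : ℕ, Real.exp (-(Real.pi*B*((1/2)*j^2+(3/2)*j+7/8))) with hSbdef
  set Sc : ℝ := ∑' j : ℕ, Real.exp (-(Real.pi*B*((3/2)*j^2+(9/2)*j+25/8))) with hScdef
  have hSbsum : Summable (fun j : ℕ => Real.exp (-(Real.pi*B*((1/2)*j^2+(3/2)*j+7/8)))) :=
    summable_quad hπB (by norm_num) (by norm_num)
  have hScsum : Summable (fun j : ℕ => Real.exp (-(Real.pi*B*((3/2)*j^2+(9/2)*j+25/8)))) :=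
    summable_quad hπB (by norm_num) (by norm_num)
  have hSb0 : 0 ≤ Sb := tsum_nonneg fun j => (Real.exp_pos _).le
  have hSc0 : 0 ≤ Sc := tsum_nonneg fun j => (Real.exp_pos _).le
  have hSb_le : Sb ≤ Real.exp (-(Real.pi*B*(7/8))) / (1 - Real.exp (-(Real.pi*B*((1/2)+(3/2))))) :=
    tsum_quad_le hπB (by norm_num) (by norm_num)
  have hSc_le : Sc ≤ Real.exp (-(Real.pi*B*(25/8))) / (1 - Real.exp (-(Real.pi*B*((3/2)+(9/2))))) :=
    tsum_quad_le hπB (by norm_num) (by norm_num)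
  -- bound for P 0
  have hP0 : P 0 ≤ cB * (2 * (Real.exp (-(Real.pi*B*2)) / (1 - Real.exp (-(Real.pi*B*(1+3)))))) := by
    have hq : ∀ j : ℕ, GG A B C (0, ((j+1:ℕ):ℤ)) + GG A B C (0, -(((j+1:ℕ):ℤ)+1)) ≤
        (2*cB) * Real.exp (-(Real.pi*B*(1*j^2+3*j+2))) := by
      intro j
      have hc : ((j+1:ℕ):ℤ) = (j:ℤ)+1 := by push_cast; ring
      rw [hc, GG_zero ((j:ℤ)+1) (by omega), GG_zero (-(((j:ℤ)+1)+1)) (by omega)]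
      have e1 : EE A B C (0, (j:ℤ)+1) = B/4 + B*(1*(j:ℝ)^2+3*j+2) := by
        rw [EE]; push_cast; ring
      have e2 : EE A B C (0, -(((j:ℤ)+1)+1)) = B/4 + B*(1*(j:ℝ)^2+3*j+2) := by
        rw [EE]; push_cast; ring
      rw [e1, e2]
      have e3 : Real.exp (-(Real.pi * (B/4 + B*(1*(j:ℝ)^2+3*j+2)))) =
          cB * Real.exp (-(Real.pi*B*(1*(j:ℝ)^2+3*j+2))) := by
        rw [hcB, ← Real.exp_add]; congr 1; ring
      rw [e3]
      exact le_of_eq (by ring)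
    have hsq : Summable (fun j : ℕ => (2*cB) * Real.exp (-(Real.pi*B*(1*j^2+3*j+2)))) :=
      (summable_quad hπB (by norm_num) (by norm_num)).mul_left _
    have hshift : Summable (fun j : ℕ => GG A B C (0, ((j+1:ℕ):ℤ)) +
        GG A B C (0, -(((j+1:ℕ):ℤ)+1))) := by
      exact (summable_nat_add_iff (f := fun j : ℕ => GG A B C (0, (j:ℤ)) +
        GG A B C (0, -((j:ℤ)+1))) 1).mpr (hPpair 0)
    have h0 : GG A B C (0, ((0:ℕ):ℤ)) + GG A B C (0, -(((0:ℕ):ℤ)+1)) = 0 := by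
      rw [GG, GG]; norm_num
    calc P 0 = (GG A B C (0, ((0:ℕ):ℤ)) + GG A B C (0, -(((0:ℕ):ℤ)+1))) +
          ∑' j : ℕ, (GG A B C (0, ((j+1:ℕ):ℤ)) + GG A B C (0, -(((j+1:ℕ):ℤ)+1))) :=
        Summable.tsum_eq_zero_add (hPpair 0)
      _ = ∑' j : ℕ, (GG A B C (0, ((j+1:ℕ):ℤ)) + GG A B C (0, -(((j+1:ℕ):ℤ)+1))) := by
        rw [h0, zero_add]
      _ ≤ ∑' j : ℕ, (2*cB) * Real.exp (-(Real.pi*B*(1*j^2+3*j+2))) :=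
        Summable.tsum_le_tsum hq hshift hsq
      _ = (2*cB) * ∑' j : ℕ, Real.exp (-(Real.pi*B*(1*j^2+3*j+2))) := tsum_mul_left
      _ ≤ (2*cB) * (Real.exp (-(Real.pi*B*2)) / (1 - Real.exp (-(Real.pi*B*(1+3))))) := by
        apply mul_le_mul_of_nonneg_left (tsum_quad_le hπB (by norm_num) (by norm_num))
          (by positivity)
      _ = cB * (2 * (Real.exp (-(Real.pi*B*2)) / (1 - Real.exp (-(Real.pi*B*(1+3)))))) := by
        ring
  -- bound for P (i+1)
  have hPi : ∀ i : ℕ, P ((i:ℤ)+1) ≤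
      cB * Real.exp (-(Real.pi*A*(1*i^2+(2-1/k)*i+(1-1/k))))
      + cB * Real.exp (-(Real.pi*A*(1*i^2+(2+1/k)*i+(1+1/k))))
      + (cB*Sb) * Real.exp (-(Real.pi*A*((1/2)*i^2+1*i+1/2)))
      + (cB*Sc) * Real.exp (-(Real.pi*A*((3/2)*i^2+3*i+3/2))) := by
    intro i
    have hne : ((i:ℤ)+1) ≠ 0 := by omega
    have h0 : GG A B C (((i:ℤ)+1), ((0:ℕ):ℤ)) + GG A B C (((i:ℤ)+1), -(((0:ℕ):ℤ)+1)) =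
        Real.exp (-(Real.pi * EE A B C (((i:ℤ)+1), 0))) +
          Real.exp (-(Real.pi * EE A B C (((i:ℤ)+1), -1))) := by
      rw [GG_ne _ hne, GG_ne _ hne]; norm_num
    have hterm : ∀ j : ℕ, GG A B C (((i:ℤ)+1), ((j+1:ℕ):ℤ)) +
        GG A B C (((i:ℤ)+1), -(((j+1:ℕ):ℤ)+1)) ≤
        (cB * Real.exp (-(Real.pi*A*((1/2)*i^2+1*i+1/2)))) *
          Real.exp (-(Real.pi*B*((1/2)*j^2+(3/2)*j+7/8)))
        + (cB * Real.exp (-(Real.pi*A*((3/2)*i^2+3*i+3/2)))) *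
          Real.exp (-(Real.pi*B*((3/2)*j^2+(9/2)*j+25/8))) := by
      intro j
      have hc : ((j+1:ℕ):ℤ) = (j:ℤ)+1 := by push_cast; ring
      have hc2 : -(((j:ℤ)+1)+1) = -((j:ℤ)+2) := by ring
      rw [hc, hc2, GG_ne _ hne, GG_ne _ hne, hcB]
      exact pairj_bound hA hB h1 i j
    have hshift : Summable (fun j : ℕ => GG A B C (((i:ℤ)+1), ((j+1:ℕ):ℤ)) +
        GG A B C (((i:ℤ)+1), -(((j+1:ℕ):ℤ)+1))) := by
      exact (summable_nat_add_iff (f := fun j : ℕ => GG A B C (((i:ℤ)+1), (j:ℤ)) +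
        GG A B C (((i:ℤ)+1), -((j:ℤ)+1))) 1).mpr (hPpair ((i:ℤ)+1))
    have hsq3 : Summable (fun j : ℕ => (cB * Real.exp (-(Real.pi*A*((1/2)*i^2+1*i+1/2)))) *
        Real.exp (-(Real.pi*B*((1/2)*j^2+(3/2)*j+7/8)))) := hSbsum.mul_left _
    have hsq4 : Summable (fun j : ℕ => (cB * Real.exp (-(Real.pi*A*((3/2)*i^2+3*i+3/2)))) *
        Real.exp (-(Real.pi*B*((3/2)*j^2+(9/2)*j+25/8)))) := hScsum.mul_left _
    calc P ((i:ℤ)+1) = (GG A B C (((i:ℤ)+1), ((0:ℕ):ℤ)) +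
          GG A B C (((i:ℤ)+1), -(((0:ℕ):ℤ)+1))) +
          ∑' j : ℕ, (GG A B C (((i:ℤ)+1), ((j+1:ℕ):ℤ)) +
            GG A B C (((i:ℤ)+1), -(((j+1:ℕ):ℤ)+1))) := Summable.tsum_eq_zero_add (hPpair ((i:ℤ)+1))
      _ ≤ (Real.exp (-(Real.pi * EE A B C (((i:ℤ)+1), 0))) +
            Real.exp (-(Real.pi * EE A B C (((i:ℤ)+1), -1)))) +
          ∑' j : ℕ, ((cB * Real.exp (-(Real.pi*A*((1/2)*i^2+1*i+1/2)))) *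
            Real.exp (-(Real.pi*B*((1/2)*j^2+(3/2)*j+7/8)))
            + (cB * Real.exp (-(Real.pi*A*((3/2)*i^2+3*i+3/2)))) *
            Real.exp (-(Real.pi*B*((3/2)*j^2+(9/2)*j+25/8)))) :=
        add_le_add (le_of_eq h0) (Summable.tsum_le_tsum hterm hshift (hsq3.add hsq4))
      _ = (Real.exp (-(Real.pi * EE A B C (((i:ℤ)+1), 0))) +
            Real.exp (-(Real.pi * EE A B C (((i:ℤ)+1), -1)))) +
          ((cB * Real.exp (-(Real.pi*A*((1/2)*i^2+1*i+1/2)))) * Sb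
            + (cB * Real.exp (-(Real.pi*A*((3/2)*i^2+3*i+3/2)))) * Sc) := by
        rw [Summable.tsum_add hsq3 hsq4, tsum_mul_left, tsum_mul_left]
      _ ≤ (cB * Real.exp (-(Real.pi*A*(1*i^2+(2-1/k)*i+(1-1/k))))
            + cB * Real.exp (-(Real.pi*A*(1*i^2+(2+1/k)*i+(1+1/k)))))
          + ((cB * Real.exp (-(Real.pi*A*((1/2)*i^2+1*i+1/2)))) * Sb
            + (cB * Real.exp (-(Real.pi*A*((3/2)*i^2+3*i+3/2)))) * Sc) := by
        apply add_le_add _ le_rfl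
        have := pair0_bound hk hA hB h2 i
        rw [hcB]
        exact this
      _ = _ := by ring
  -- closed-form bounds for the i-sums
  have hd1 : (0:ℝ) < 1+(2-1/k) := by linarith
  have hd2 : (0:ℝ) < 1+(2+1/k) := by linarith
  have hq1 : Summable (fun i : ℕ => Real.exp (-(Real.pi*A*(1*i^2+(2-1/k)*i+(1-1/k))))) :=
    summable_quad hπA (by norm_num) hd1
  have hq2 : Summable (fun i : ℕ => Real.exp (-(Real.pi*A*(1*i^2+(2+1/k)*i+(1+1/k))))) :=
    summable_quad hπA (by norm_num) hd2
  have hq3 : Summable (fun i : ℕ => Real.exp (-(Real.pi*A*((1/2)*i^2+1*i+1/2)))) :=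
    summable_quad hπA (by norm_num) (by norm_num)
  have hq4 : Summable (fun i : ℕ => Real.exp (-(Real.pi*A*((3/2)*i^2+3*i+3/2)))) :=
    summable_quad hπA (by norm_num) (by norm_num)
  have hT1 : (∑' i : ℕ, Real.exp (-(Real.pi*A*(1*i^2+(2-1/k)*i+(1-1/k))))) ≤
      Real.exp (-(Real.pi*A*(1-1/k))) / (1 - Real.exp (-(Real.pi*A*(1+(2-1/k))))) :=
    tsum_quad_le hπA (by norm_num) hd1
  have hT2 : (∑' i : ℕ, Real.exp (-(Real.pi*A*(1*i^2+(2+1/k)*i+(1+1/k))))) ≤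
      Real.exp (-(Real.pi*A*(1+1/k))) / (1 - Real.exp (-(Real.pi*A*(1+(2+1/k))))) :=
    tsum_quad_le hπA (by norm_num) hd2
  have hT3 : (∑' i : ℕ, Real.exp (-(Real.pi*A*((1/2)*i^2+1*i+1/2)))) ≤
      Real.exp (-(Real.pi*A*(1/2))) / (1 - Real.exp (-(Real.pi*A*((1/2)+1)))) :=
    tsum_quad_le hπA (by norm_num) (by norm_num)
  have hT4 : (∑' i : ℕ, Real.exp (-(Real.pi*A*((3/2)*i^2+3*i+3/2)))) ≤
      Real.exp (-(Real.pi*A*(3/2))) / (1 - Real.exp (-(Real.pi*A*((3/2)+3)))) :=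
    tsum_quad_le hπA (by norm_num) (by norm_num)
  have hEb : (0:ℝ) < 1 - Real.exp (-(Real.pi*B*((1/2)+(3/2)))) := by
    have := Real.exp_lt_one_iff.mpr (show -(Real.pi*B*((1/2)+(3/2))) < 0 by nlinarith)
    linarith
  have hEc : (0:ℝ) < 1 - Real.exp (-(Real.pi*B*((3/2)+(9/2)))) := by
    have := Real.exp_lt_one_iff.mpr (show -(Real.pi*B*((3/2)+(9/2))) < 0 by nlinarith)
    linarith
  have hSbb0 : (0:ℝ) ≤ Real.exp (-(Real.pi*B*(7/8))) /
      (1 - Real.exp (-(Real.pi*B*((1/2)+(3/2))))) := div_nonneg (Real.exp_pos _).le hEb.le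
  have hScb0 : (0:ℝ) ≤ Real.exp (-(Real.pi*B*(25/8))) /
      (1 - Real.exp (-(Real.pi*B*((3/2)+(9/2))))) := div_nonneg (Real.exp_pos _).le hEc.le
  have hTs : ∑' i : ℕ, P ((i:ℤ)+1) ≤
      cB * (Real.exp (-(Real.pi*A*(1-1/k))) / (1 - Real.exp (-(Real.pi*A*(1+(2-1/k))))))
      + cB * (Real.exp (-(Real.pi*A*(1+1/k))) / (1 - Real.exp (-(Real.pi*A*(1+(2+1/k))))))
      + (cB * (Real.exp (-(Real.pi*B*(7/8))) / (1 - Real.exp (-(Real.pi*B*((1/2)+(3/2))))))) *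
          (Real.exp (-(Real.pi*A*(1/2))) / (1 - Real.exp (-(Real.pi*A*((1/2)+1)))))
      + (cB * (Real.exp (-(Real.pi*B*(25/8))) / (1 - Real.exp (-(Real.pi*B*((3/2)+(9/2))))))) *
          (Real.exp (-(Real.pi*A*(3/2))) / (1 - Real.exp (-(Real.pi*A*((3/2)+3))))) := by
    calc ∑' i : ℕ, P ((i:ℤ)+1)
        ≤ ∑' i : ℕ, (cB * Real.exp (-(Real.pi*A*(1*i^2+(2-1/k)*i+(1-1/k))))
          + cB * Real.exp (-(Real.pi*A*(1*i^2+(2+1/k)*i+(1+1/k))))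
          + (cB*Sb) * Real.exp (-(Real.pi*A*((1/2)*i^2+1*i+1/2)))
          + (cB*Sc) * Real.exp (-(Real.pi*A*((3/2)*i^2+3*i+3/2)))) :=
          Summable.tsum_le_tsum hPi hs1
            ((((hq1.mul_left cB).add (hq2.mul_left cB)).add (hq3.mul_left (cB*Sb))).add
              (hq4.mul_left (cB*Sc)))
      _ = cB * (∑' i : ℕ, Real.exp (-(Real.pi*A*(1*i^2+(2-1/k)*i+(1-1/k)))))
          + cB * (∑' i : ℕ, Real.exp (-(Real.pi*A*(1*i^2+(2+1/k)*i+(1+1/k)))))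
          + (cB*Sb) * (∑' i : ℕ, Real.exp (-(Real.pi*A*((1/2)*i^2+1*i+1/2))))
          + (cB*Sc) * (∑' i : ℕ, Real.exp (-(Real.pi*A*((3/2)*i^2+3*i+3/2)))) := by
          rw [Summable.tsum_add (((hq1.mul_left cB).add (hq2.mul_left cB)).add (hq3.mul_left (cB*Sb)))
              (hq4.mul_left (cB*Sc)),
            Summable.tsum_add ((hq1.mul_left cB).add (hq2.mul_left cB)) (hq3.mul_left (cB*Sb)),
            Summable.tsum_add (hq1.mul_left cB) (hq2.mul_left cB),
            tsum_mul_left, tsum_mul_left, tsum_mul_left, tsum_mul_left]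
      _ ≤ _ := by
          have m1 := mul_le_mul_of_nonneg_left hT1 hcB0.le
          have m2 := mul_le_mul_of_nonneg_left hT2 hcB0.le
          have m3 : (cB*Sb) * (∑' i : ℕ, Real.exp (-(Real.pi*A*((1/2)*i^2+1*i+1/2)))) ≤
              (cB * (Real.exp (-(Real.pi*B*(7/8))) /
                (1 - Real.exp (-(Real.pi*B*((1/2)+(3/2))))))) *
              (Real.exp (-(Real.pi*A*(1/2))) / (1 - Real.exp (-(Real.pi*A*((1/2)+1))))) :=
            mul_le_mul (mul_le_mul_of_nonneg_left hSb_le hcB0.le) hT3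
              (tsum_nonneg fun i => (Real.exp_pos _).le)
              (mul_nonneg hcB0.le hSbb0)
          have m4 : (cB*Sc) * (∑' i : ℕ, Real.exp (-(Real.pi*A*((3/2)*i^2+3*i+3/2)))) ≤
              (cB * (Real.exp (-(Real.pi*B*(25/8))) /
                (1 - Real.exp (-(Real.pi*B*((3/2)+(9/2))))))) *
              (Real.exp (-(Real.pi*A*(3/2))) / (1 - Real.exp (-(Real.pi*A*((3/2)+3))))) :=
            mul_le_mul (mul_le_mul_of_nonneg_left hSc_le hcB0.le) hT4
              (tsum_nonneg fun i => (Real.exp_pos _).le)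
              (mul_nonneg hcB0.le hScb0)
          linarith
  have hrho : rho89 k (Real.exp (-Real.pi*A)) (Real.exp (-Real.pi*B)) =
      (Real.exp (-(Real.pi*B*2)) / (1 - Real.exp (-(Real.pi*B*(1+3)))))
      + (Real.exp (-(Real.pi*A*(1-1/k))) / (1 - Real.exp (-(Real.pi*A*(1+(2-1/k))))))
      + (Real.exp (-(Real.pi*A*(1+1/k))) / (1 - Real.exp (-(Real.pi*A*(1+(2+1/k))))))
      + (Real.exp (-(Real.pi*B*(7/8))) / (1 - Real.exp (-(Real.pi*B*((1/2)+(3/2)))))) *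
          (Real.exp (-(Real.pi*A*(1/2))) / (1 - Real.exp (-(Real.pi*A*((1/2)+1)))))
      + (Real.exp (-(Real.pi*B*(25/8))) / (1 - Real.exp (-(Real.pi*B*((3/2)+(9/2)))))) *
          (Real.exp (-(Real.pi*A*(3/2))) / (1 - Real.exp (-(Real.pi*A*((3/2)+3))))) := by
    rw [rho89]
    simp only [expRpow]
    rw [div_mul_div_comm, div_mul_div_comm]
    ring_nf
  calc ∑' p : ℤ × ℤ, GG A B C p = P 0 + 2 * ∑' i : ℕ, P ((i:ℤ)+1) := by rw [htot, hsplit]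
    _ ≤ cB * (2 * (Real.exp (-(Real.pi*B*2)) / (1 - Real.exp (-(Real.pi*B*(1+3))))))
        + 2 * (cB * (Real.exp (-(Real.pi*A*(1-1/k))) / (1 - Real.exp (-(Real.pi*A*(1+(2-1/k))))))
        + cB * (Real.exp (-(Real.pi*A*(1+1/k))) / (1 - Real.exp (-(Real.pi*A*(1+(2+1/k))))))
        + (cB * (Real.exp (-(Real.pi*B*(7/8))) / (1 - Real.exp (-(Real.pi*B*((1/2)+(3/2))))))) *
            (Real.exp (-(Real.pi*A*(1/2))) / (1 - Real.exp (-(Real.pi*A*((1/2)+1)))))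
        + (cB * (Real.exp (-(Real.pi*B*(25/8))) / (1 - Real.exp (-(Real.pi*B*((3/2)+(9/2))))))) *
            (Real.exp (-(Real.pi*A*(3/2))) / (1 - Real.exp (-(Real.pi*A*((3/2)+3)))))) :=
        add_le_add hP0 (by linarith)
    _ = 2 * cB * ((Real.exp (-(Real.pi*B*2)) / (1 - Real.exp (-(Real.pi*B*(1+3)))))
        + (Real.exp (-(Real.pi*A*(1-1/k))) / (1 - Real.exp (-(Real.pi*A*(1+(2-1/k))))))
        + (Real.exp (-(Real.pi*A*(1+1/k))) / (1 - Real.exp (-(Real.pi*A*(1+(2+1/k))))))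
        + (Real.exp (-(Real.pi*B*(7/8))) / (1 - Real.exp (-(Real.pi*B*((1/2)+(3/2)))))) *
            (Real.exp (-(Real.pi*A*(1/2))) / (1 - Real.exp (-(Real.pi*A*((1/2)+1)))))
        + (Real.exp (-(Real.pi*B*(25/8))) / (1 - Real.exp (-(Real.pi*B*((3/2)+(9/2)))))) *
            (Real.exp (-(Real.pi*A*(3/2))) / (1 - Real.exp (-(Real.pi*A*((3/2)+3)))))) := by
        ring
    _ = _ := by rw [hrho, hcB]

set_option maxHeartbeats 1000000 in
lemma key_est (k : ℝ) (hk : 1 ≤ k) (τ : Mat2) (hτ : inH2 τ)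
    (h1 : y3 τ ^ 2 ≤ 1/4 * y1 τ * y2 τ) (h2 : k * |y3 τ| ≤ y1 τ) (b0 : ℤ) :
    ‖theta ![0, 1] ![b0, 0] τ / xi89 τ - 1‖ ≤ rho89 k (q1 τ) (q2 τ) := by
  classical
  have hπ := Real.pi_pos
  have hsymm : τ 1 0 = τ 0 1 := hτ.1.apply 0 1
  have hApos : 0 < y1 τ := by
    have h := hτ.2.dotProduct_mulVec_pos (x := fun i => if i = 0 then 1 else 0) (by
      intro h; have := congrFun h 0; simp at this)
    simpa [Matrix.mulVec, dotProduct, Fin.sum_univ_two, y1, z1] using h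
  have hBpos : 0 < y2 τ := by
    have h := hτ.2.dotProduct_mulVec_pos (x := fun i => if i = 1 then 1 else 0) (by
      intro h; have := congrFun h 1; simp at this)
    simpa [Matrix.mulVec, dotProduct, Fin.sum_univ_two, y2, z2] using h
  have h1' : (y3 τ)^2 ≤ 1/4*(y1 τ)*(y2 τ) := h1
  have hFa : Summable (fun p : ℤ × ℤ => Real.exp (-(Real.pi * EE (y1 τ) (y2 τ) (y3 τ) p))) :=
    summable_absfT hApos hBpos h1'
  have hfsum : Summable (fT τ b0) := by
    apply Summable.of_norm
    exact hFa.congr fun p => (abs_fT τ b0 p).symm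
  have hθ := theta_eq τ hsymm b0
  have hξ := xi_eq τ b0
  set g : ℤ × ℤ → ℂ := fun p => if p = ((0:ℤ),(-1:ℤ)) then 0
    else (if p = ((0:ℤ),(0:ℤ)) then 0 else fT τ b0 p) with hgdef
  have hg_norm : ∀ p, ‖g p‖ = GG (y1 τ) (y2 τ) (y3 τ) p := by
    intro p
    by_cases h0 : p = ((0:ℤ),(0:ℤ))
    · simp [hgdef, GG, h0]
    · by_cases hm1 : p = ((0:ℤ),(-1:ℤ))
      · simp [hgdef, GG, hm1]
      · rw [hgdef]
        simp only [if_neg h0, if_neg hm1, GG,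
          if_neg (show ¬(p = ((0:ℤ),(0:ℤ)) ∨ p = ((0:ℤ),(-1:ℤ))) by tauto)]
        exact abs_fT τ b0 p
  have hgnormsum : Summable (fun p => ‖g p‖) :=
    (summable_GG hApos hBpos h1').congr fun p => (hg_norm p).symm
  have hsum1 : Summable (fun p : ℤ × ℤ => if p = ((0:ℤ),(0:ℤ)) then 0 else fT τ b0 p) := by
    apply Summable.of_norm
    refine Summable.of_nonneg_of_le (fun p => norm_nonneg _) (fun p => ?_) hFa
    split_ifs with h
    · simpa using (Real.exp_pos _).le
    · rw [abs_fT]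
  have e1 : theta ![0, 1] ![b0, 0] τ =
      fT τ b0 (0,0) + ∑' p : ℤ × ℤ, (if p = ((0:ℤ),(0:ℤ)) then 0 else fT τ b0 p) := by
    rw [hθ]; exact Summable.tsum_eq_add_tsum_ite hfsum _
  have e2 : (∑' p : ℤ × ℤ, (if p = ((0:ℤ),(0:ℤ)) then 0 else fT τ b0 p)) =
      fT τ b0 (0,-1) + ∑' p : ℤ × ℤ, g p := by
    have h := Summable.tsum_eq_add_tsum_ite hsum1 ((0:ℤ),(-1:ℤ))
    rw [h]
    norm_num [hgdef]
  have hθξ : theta ![0, 1] ![b0, 0] τ - xi89 τ = ∑' p : ℤ × ℤ, g p := by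
    rw [e1, e2, hξ]; ring
  have hξabs : ‖xi89 τ‖ = 2 * Real.exp (-(Real.pi * (y2 τ) / 4)) := by
    have same : fT τ b0 ((0:ℤ),(-1:ℤ)) = fT τ b0 ((0:ℤ),(0:ℤ)) := by
      rw [fT, fT]; congr 2; push_cast; ring
    rw [hξ, same, ← two_mul, norm_mul, Complex.norm_two, abs_fT]
    have : EE (y1 τ) (y2 τ) (y3 τ) ((0:ℤ),(0:ℤ)) = (y2 τ)/4 := by
      rw [EE]; push_cast; ring
    rw [this]
    ring_nf
  have hξne : xi89 τ ≠ 0 := by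
    rw [xi89]
    exact mul_ne_zero two_ne_zero (Complex.exp_ne_zero _)
  have hξpos : 0 < ‖xi89 τ‖ := by
    rw [hξabs]; positivity
  rw [div_sub_one hξne, norm_div, div_le_iff₀ hξpos]
  calc ‖theta ![0, 1] ![b0, 0] τ - xi89 τ‖
      = ‖∑' p : ℤ × ℤ, g p‖ := by rw [hθξ]
    _ ≤ ∑' p : ℤ × ℤ, ‖g p‖ := norm_tsum_le_tsum_norm hgnormsum
    _ = ∑' p : ℤ × ℤ, GG (y1 τ) (y2 τ) (y3 τ) p := tsum_congr hg_norm
    _ ≤ 2 * Real.exp (-(Real.pi*(y2 τ)/4)) *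
        rho89 k (Real.exp (-Real.pi*(y1 τ))) (Real.exp (-Real.pi*(y2 τ))) :=
      main_est hk hApos hBpos h1' h2
    _ = rho89 k (q1 τ) (q2 τ) * ‖xi89 τ‖ := by
      rw [hξabs, q1, q2]; ring

/-- Estimate on θ₈ and θ₉. -/
theorem stmt_8 (k : ℝ) (hk : 1 ≤ k) (τ : Mat2) (hτ : inH2 τ)
    (h1 : y3 τ ^ 2 ≤ 1/4 * y1 τ * y2 τ) (h2 : k * |y3 τ| ≤ y1 τ) :
    ∀ j ∈ ({8, 9} : Set ℕ),
      ‖thetaIdx j τ / xi89 τ - 1‖ ≤ rho89 k (q1 τ) (q2 τ) := by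
  intro j hj
  have hj' : j = 8 ∨ j = 9 := hj
  have ea : ∀ jj : ℕ, jj = 8 ∨ jj = 9 → (![((jj / 4 % 2 : ℕ) : ℤ), ((jj / 8 % 2 : ℕ) : ℤ)]) =
      (![(0:ℤ), 1]) := by
    rintro jj (rfl | rfl) <;> (funext i; fin_cases i <;> norm_num)
  rcases hj' with rfl | rfl
  · have eb : (![(((8:ℕ) % 2 : ℕ) : ℤ), (((8:ℕ) / 2 % 2 : ℕ) : ℤ)]) = (![(0:ℤ), 0]) := by
      funext i; fin_cases i <;> norm_num
    rw [thetaIdx, ea 8 (Or.inl rfl), eb]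
    exact key_est k hk τ hτ h1 h2 0
  · have eb : (![(((9:ℕ) % 2 : ℕ) : ℤ), (((9:ℕ) / 2 % 2 : ℕ) : ℤ)]) = (![(1:ℤ), 0]) := by
      funext i; fin_cases i <;> norm_num
    rw [thetaIdx, ea 9 (Or.inr rfl), eb]
    exact key_est k hk τ hτ h1 h2 1
end
end

section
/- Let τ ∈ ℋ₂ satisfy y₃(τ)² ≤ (1/4)·y₁(τ)·y₂(τ). Then |θ₀(τ) − ξ₀(τ)| ≤ ρ₀(q₁(τ),q₂(τ)); for j ∈ {0,2}, |θ_j(τ) − ξ_{0,2}(τ)| ≤ ρ₀(q₁(τ),q₂(τ)) + 2q₂(τ); for j ∈ {0,1}, |θ_j(τ) − ξ_{0,1}(τ)| ≤ ρ₀(q₁(τ),q₂(τ)) + 2q₁(τ); and for all 0 ≤ j ≤ 3, |θ_j(τ) − 1| ≤ ρ₀(q₁(τ),q₂(τ)) + 2q₁(τ) + 2q₂(τ). -/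
open Complex

noncomputable section

namespace Stmt9Aux

def v00 : Fin 2 → ℤ := ![0, 0]
def v10 : Fin 2 → ℤ := ![1, 0]
def vm10 : Fin 2 → ℤ := ![-1, 0]
def v01 : Fin 2 → ℤ := ![0, 1]
def v0m1 : Fin 2 → ℤ := ![0, -1]

def S5 : Finset (Fin 2 → ℤ) := {v00, v10, vm10, v01, v0m1}

def term (b : Fin 2 → ℤ) (τ : Mat2) (m : Fin 2 → ℤ) : ℂ :=
  Complex.exp ((Real.pi : ℂ) * Complex.I *
      ((∑ i : Fin 2, ∑ j : Fin 2, (m i : ℂ) * τ i j * (m j : ℂ)) +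
        ∑ i : Fin 2, (m i : ℂ) * ((b i : ℂ) / 2)))

def Qy (τ : Mat2) (m : Fin 2 → ℤ) : ℝ :=
  (m 0 : ℝ)^2 * y1 τ + 2 * (m 0 : ℝ) * (m 1 : ℝ) * y3 τ + (m 1 : ℝ)^2 * y2 τ

def FF (τ : Mat2) (m : Fin 2 → ℤ) : ℝ := Real.exp (-Real.pi * Qy τ m)

lemma theta_eq (b : Fin 2 → ℤ) (τ : Mat2) : theta ![0,0] b τ = ∑' m, term b τ m := by
  unfold theta term
  refine tsum_congr fun m => ?_
  congr 2
  simp [Fin.sum_univ_two]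

lemma norm_term (τ : Mat2) (hsymm : τ.IsSymm) (b m : Fin 2 → ℤ) :
    ‖term b τ m‖ = FF τ m := by
  have h10 : (τ 1 0).im = (τ 0 1).im := by rw [hsymm.apply]
  rw [term, Complex.norm_exp, FF]
  congr 1
  simp [Fin.sum_univ_two, Complex.mul_re, Complex.mul_im, Qy, y1, y2, y3, z1, z2, z3]
  ring_nf
  linear_combination ((m 0 : ℝ) * (m 1 : ℝ)) * h10

end Stmt9Aux
namespace Stmt9Aux

lemma y1_pos (τ : Mat2) (hτ : inH2 τ) : 0 < y1 τ := by
  have := hτ.2.diag_pos (i := 0)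
  simpa [y1, z1] using this

lemma y2_pos (τ : Mat2) (hτ : inH2 τ) : 0 < y2 τ := by
  have := hτ.2.diag_pos (i := 1)
  simpa [y2, z2] using this

lemma cross_bound (τ : Mat2) (hτ : inH2 τ) (h : y3 τ ^ 2 ≤ 1/4 * y1 τ * y2 τ)
    (a b : ℝ) : |2 * a * b * y3 τ| ≤ (a^2 * y1 τ + b^2 * y2 τ) / 2 := by
  have hy1 := y1_pos τ hτ
  have hy2 := y2_pos τ hτ
  have s1 := Real.sq_sqrt hy1.le
  have s2 := Real.sq_sqrt hy2.le
  have s1n := Real.sqrt_nonneg (y1 τ)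
  have s2n := Real.sqrt_nonneg (y2 τ)
  have h3 : |y3 τ| ≤ Real.sqrt (y1 τ) * Real.sqrt (y2 τ) / 2 := by
    rw [← Real.sqrt_sq_eq_abs]
    rw [show Real.sqrt (y1 τ) * Real.sqrt (y2 τ) / 2
        = Real.sqrt (1/4 * y1 τ * y2 τ) from ?_]
    · exact Real.sqrt_le_sqrt h
    · rw [show (1:ℝ)/4 * y1 τ * y2 τ = (y1 τ) * (y2 τ) * (1/4) by ring,
        Real.sqrt_mul (by positivity), Real.sqrt_mul hy1.le]
      rw [show (1:ℝ)/4 = (1/2)^2 by norm_num, Real.sqrt_sq (by norm_num)]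
      ring
  have habs : |2 * a * b * y3 τ| = 2 * |a| * |b| * |y3 τ| := by
    rw [abs_mul, abs_mul, abs_mul]
    norm_num
  rw [habs]
  have ha2 : a^2 = |a|^2 := (_root_.sq_abs a).symm
  have hb2 : b^2 = |b|^2 := (_root_.sq_abs b).symm
  rw [ha2, hb2]
  nlinarith [abs_nonneg a, abs_nonneg b, abs_nonneg (y3 τ),
    sq_nonneg (|a| * Real.sqrt (y1 τ) - |b| * Real.sqrt (y2 τ)),
    mul_le_mul_of_nonneg_left h3 (by positivity : (0:ℝ) ≤ 2 * |a| * |b|)]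

lemma Qy_ge_half (τ : Mat2) (hτ : inH2 τ) (h : y3 τ ^ 2 ≤ 1/4 * y1 τ * y2 τ)
    (m : Fin 2 → ℤ) :
    ((m 0 : ℝ)^2 * y1 τ + (m 1 : ℝ)^2 * y2 τ) / 2 ≤ Qy τ m := by
  have := cross_bound τ hτ h (m 0 : ℝ) (m 1 : ℝ)
  have := neg_abs_le (2 * (m 0 : ℝ) * (m 1 : ℝ) * y3 τ)
  unfold Qy
  linarith

lemma summable_exp_int (c : ℝ) (hc : 0 < c) :
    Summable (fun n : ℤ => Real.exp (-c * (n : ℝ)^2)) := by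
  have key : Summable (fun n : ℕ => Real.exp (-c * (n : ℝ)^2)) := by
    apply Summable.of_nonneg_of_le (fun n => (Real.exp_pos _).le) (fun n => ?_)
      (summable_geometric_of_lt_one (Real.exp_pos (-c)).le
        (Real.exp_lt_one_iff.mpr (by linarith)))
    rw [← Real.exp_nat_mul]
    apply Real.exp_le_exp.mpr
    have : (n : ℝ) ≤ (n : ℝ)^2 := by
      rcases Nat.eq_zero_or_pos n with h0 | h0
      · simp [h0]
      · nlinarith [(by exact_mod_cast h0 : (1:ℝ) ≤ (n:ℝ))]
    nlinarith
  apply Summable.of_nat_of_neg <;> simpa using key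

lemma summable_FF (τ : Mat2) (hτ : inH2 τ) (h : y3 τ ^ 2 ≤ 1/4 * y1 τ * y2 τ) :
    Summable (FF τ) := by
  have hy1 := y1_pos τ hτ
  have hy2 := y2_pos τ hτ
  set c1 := Real.pi * y1 τ / 2 with hc1
  set c2 := Real.pi * y2 τ / 2 with hc2
  have hc1p : 0 < c1 := by positivity
  have hc2p : 0 < c2 := by positivity
  have hprod : Summable (fun p : ℤ × ℤ =>
      Real.exp (-c1 * (p.1 : ℝ)^2) * Real.exp (-c2 * (p.2 : ℝ)^2)) :=
    (summable_exp_int c1 hc1p).mul_of_nonneg (summable_exp_int c2 hc2p)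
      (fun n => (Real.exp_pos _).le) (fun n => (Real.exp_pos _).le)
  have htrans : Summable (fun m : Fin 2 → ℤ =>
      Real.exp (-c1 * (m 0 : ℝ)^2) * Real.exp (-c2 * (m 1 : ℝ)^2)) := by
    have := (finTwoArrowEquiv ℤ).summable_iff.mpr hprod
    simpa [Function.comp_def, finTwoArrowEquiv] using this
  apply Summable.of_nonneg_of_le (fun m => (Real.exp_pos _).le) (fun m => ?_) htrans
  rw [← Real.exp_add, Real.exp_le_exp]
  have := Qy_ge_half τ hτ h m
  have hpi := Real.pi_pos
  nlinarith [Qy_ge_half τ hτ h m]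

end Stmt9Aux
namespace Stmt9Aux

def SA : Set (Fin 2 → ℤ) := {m | m 1 = 0 ∧ (2 ≤ m 0 ∨ m 0 ≤ -2)}
def SB : Set (Fin 2 → ℤ) := {m | m 0 = 0 ∧ (2 ≤ m 1 ∨ m 1 ≤ -2)}
def SC : Set (Fin 2 → ℤ) := {m | m 0 ≠ 0 ∧ m 1 ≠ 0}

lemma tsum_geo (a r : ℝ) (hr0 : 0 ≤ r) (hr : r < 1) :
    ∑' n : ℕ, a * r ^ n = a / (1 - r) := by
  rw [tsum_mul_left, tsum_geometric_of_lt_one hr0 hr, div_eq_mul_inv]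

lemma summable_geo (a r : ℝ) (hr0 : 0 ≤ r) (hr : r < 1) :
    Summable (fun n : ℕ => a * r ^ n) :=
  (summable_geometric_of_lt_one hr0 hr).mul_left a

lemma summable_boolnat (a r : ℝ) (ha : 0 ≤ a) (hr0 : 0 ≤ r) (hr : r < 1) :
    Summable (fun p : Bool × ℕ => a * r ^ p.2) := by
  have := (Summable.of_finite (f := fun _ : Bool => (1:ℝ))).mul_of_nonneg
    (summable_geo a r hr0 hr) (fun _ => zero_le_one) ?_
  · simpa using this
  · intro n
    positivity
  
lemma tsum_boolnat (a r : ℝ) (ha : 0 ≤ a) (hr0 : 0 ≤ r) (hr : r < 1) :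
    ∑' p : Bool × ℕ, a * r ^ p.2 = 2 * (a / (1 - r)) := by
  rw [Summable.tsum_prod' (summable_boolnat a r ha hr0 hr) (fun b => summable_geo a r hr0 hr)]
  simp only [tsum_geo a r hr0 hr]
  rw [tsum_bool]
  ring

lemma pieceA (τ : Mat2) (hτ : inH2 τ) (h : y3 τ ^ 2 ≤ 1/4 * y1 τ * y2 τ) :
    ∑' x : SA, FF τ x ≤
      2 * (Real.exp (-Real.pi * y1 τ * 4) / (1 - Real.exp (-Real.pi * y1 τ * 5))) := by
  have hy1 := y1_pos τ hτ
  have hpi := Real.pi_pos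
  set a := Real.exp (-Real.pi * y1 τ * 4) with ha
  set r := Real.exp (-Real.pi * y1 τ * 5) with hr
  have ha0 : 0 ≤ a := (Real.exp_pos _).le
  have hr0 : 0 ≤ r := (Real.exp_pos _).le
  have hr1 : r < 1 := Real.exp_lt_one_iff.mpr (by nlinarith)
  have hg := summable_boolnat a r ha0 hr0 hr1
  have key := Summable.tsum_le_tsum_of_inj
      (f := fun x : SA => FF τ x) (g := fun p : Bool × ℕ => a * r ^ p.2)
      (fun x => (decide (x.1 0 < 0), (x.1 0).natAbs - 2))
      ?_ (fun c _ => by positivity) ?_ ((summable_FF τ hτ h).subtype SA) hg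
  · calc ∑' x : SA, FF τ x ≤ _ := key
      _ = 2 * (a / (1 - r)) := tsum_boolnat a r ha0 hr0 hr1
  · rintro ⟨x, hx1, hx2⟩ ⟨y, hy1', hy2'⟩ hxy
    simp only [Prod.mk.injEq, decide_eq_decide] at hxy
    apply Subtype.ext
    funext i
    fin_cases i
    · have h1 := hxy.1
      have h2 := hxy.2
      show x 0 = y 0
      omega
    · show x 1 = y 1
      omega
  · rintro ⟨m, hm1, hm2⟩
    simp only [FF, Qy, hm1]
    push_cast
    rw [← Real.exp_nat_mul, ← Real.exp_add, Real.exp_le_exp]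
    have hk : 2 ≤ (m 0).natAbs := by omega
    set k := (m 0).natAbs with hkdef
    have hcast : ((m 0 : ℝ))^2 = (k : ℝ)^2 := by
      simp [hkdef, Nat.cast_natAbs, Int.cast_abs, _root_.sq_abs]
    have hn : ((k - 2 : ℕ) : ℝ) = (k : ℝ) - 2 := by
      push_cast [Nat.cast_sub hk]
      ring
    rw [hn, hcast]
    have hk2 : (2:ℝ) ≤ (k:ℝ) := by exact_mod_cast hk
    have hexpZ : (4:ℤ) + 5*((k:ℤ)-2) ≤ (k:ℤ)^2 := by
      rcases Nat.lt_or_ge k 3 with h3 | h3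
      · interval_cases k <;> norm_num
      · have h3' : (3:ℤ) ≤ (k:ℤ) := by exact_mod_cast h3
        nlinarith [mul_nonneg (by linarith : (0:ℤ) ≤ (k:ℤ)-2) (by linarith : (0:ℤ) ≤ (k:ℤ)-3)]
    have hexp : (4:ℝ) + 5*((k:ℝ)-2) ≤ (k:ℝ)^2 := by exact_mod_cast hexpZ
    nlinarith [mul_le_mul_of_nonneg_left hexp (show (0:ℝ) ≤ Real.pi * y1 τ by positivity)]

end Stmt9Aux
namespace Stmt9Aux

lemma pieceB (τ : Mat2) (hτ : inH2 τ) (h : y3 τ ^ 2 ≤ 1/4 * y1 τ * y2 τ) :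
    ∑' x : SB, FF τ x ≤
      2 * (Real.exp (-Real.pi * y2 τ * 4) / (1 - Real.exp (-Real.pi * y2 τ * 5))) := by
  have hy2 := y2_pos τ hτ
  have hpi := Real.pi_pos
  set a := Real.exp (-Real.pi * y2 τ * 4) with ha
  set r := Real.exp (-Real.pi * y2 τ * 5) with hr
  have ha0 : 0 ≤ a := (Real.exp_pos _).le
  have hr0 : 0 ≤ r := (Real.exp_pos _).le
  have hr1 : r < 1 := Real.exp_lt_one_iff.mpr (by nlinarith)
  have hg := summable_boolnat a r ha0 hr0 hr1
  have key := Summable.tsum_le_tsum_of_inj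
      (f := fun x : SB => FF τ x) (g := fun p : Bool × ℕ => a * r ^ p.2)
      (fun x => (decide (x.1 1 < 0), (x.1 1).natAbs - 2))
      ?_ (fun c _ => by positivity) ?_ ((summable_FF τ hτ h).subtype SB) hg
  · calc ∑' x : SB, FF τ x ≤ _ := key
      _ = 2 * (a / (1 - r)) := tsum_boolnat a r ha0 hr0 hr1
  · rintro ⟨x, hx1, hx2⟩ ⟨y, hy1', hy2'⟩ hxy
    simp only [Prod.mk.injEq, decide_eq_decide] at hxy
    apply Subtype.ext
    funext i
    fin_cases i
    · show x 0 = y 0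
      omega
    · have h1 := hxy.1
      have h2 := hxy.2
      show x 1 = y 1
      omega
  · rintro ⟨m, hm1, hm2⟩
    simp only [FF, Qy, hm1]
    push_cast
    rw [← Real.exp_nat_mul, ← Real.exp_add, Real.exp_le_exp]
    have hk : 2 ≤ (m 1).natAbs := by omega
    set k := (m 1).natAbs with hkdef
    have hcast : ((m 1 : ℝ))^2 = (k : ℝ)^2 := by
      simp [hkdef, Nat.cast_natAbs, Int.cast_abs, _root_.sq_abs]
    have hn : ((k - 2 : ℕ) : ℝ) = (k : ℝ) - 2 := by
      push_cast [Nat.cast_sub hk]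
      ring
    rw [hn, hcast]
    have hk2 : (2:ℝ) ≤ (k:ℝ) := by exact_mod_cast hk
    have hexpZ : (4:ℤ) + 5*((k:ℤ)-2) ≤ (k:ℤ)^2 := by
      rcases Nat.lt_or_ge k 3 with h3 | h3
      · interval_cases k <;> norm_num
      · have h3' : (3:ℤ) ≤ (k:ℤ) := by exact_mod_cast h3
        nlinarith [mul_nonneg (by linarith : (0:ℤ) ≤ (k:ℤ)-2) (by linarith : (0:ℤ) ≤ (k:ℤ)-3)]
    have hexp : (4:ℝ) + 5*((k:ℝ)-2) ≤ (k:ℝ)^2 := by exact_mod_cast hexpZ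
    nlinarith [mul_le_mul_of_nonneg_left hexp (show (0:ℝ) ≤ Real.pi * y2 τ by positivity)]

end Stmt9Aux
namespace Stmt9Aux

lemma pair_exp (S c : ℝ) (hc : |c| ≤ S / 2) :
    Real.exp (-(S + c)) + Real.exp (-(S - c)) ≤
      Real.exp (-(S / 2)) + Real.exp (-(3 * S / 2)) := by
  have hS : 0 ≤ S := by have := abs_nonneg c; linarith
  have e3 : Real.exp (-(S + c)) = Real.exp (-S) * Real.exp (-c) := by
    rw [← Real.exp_add]; congr 1; ring
  have e4 : Real.exp (-(S - c)) = Real.exp (-S) * Real.exp c := by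
    rw [← Real.exp_add]; congr 1; ring
  have e1 : Real.exp (-(S/2)) = Real.exp (-S) * Real.exp (S/2) := by
    rw [← Real.exp_add]; congr 1; ring
  have e2 : Real.exp (-(3*S/2)) = Real.exp (-S) * Real.exp (-(S/2)) := by
    rw [← Real.exp_add]; congr 1; ring
  have h1 : Real.exp (-(S + c)) + Real.exp (-(S - c)) =
      2 * Real.exp (-S) * Real.cosh c := by
    rw [Real.cosh_eq, e3, e4]; ring
  have h2 : Real.exp (-(S/2)) + Real.exp (-(3*S/2)) =
      2 * Real.exp (-S) * Real.cosh (S/2) := by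
    rw [Real.cosh_eq]
    conv_lhs => rw [e1, e2]
    ring
  rw [h1, h2]
  have hcc := Real.cosh_le_cosh.mpr
    (show |c| ≤ |S/2| by rwa [_root_.abs_of_nonneg (by linarith : (0:ℝ) ≤ S/2)])
  nlinarith [Real.exp_pos (-S)]

def sgn (b : Bool) (k : ℕ) : ℤ := if b then -((k:ℤ)+1) else (k:ℤ)+1

lemma sgn_ne_zero (b : Bool) (k : ℕ) : sgn b k ≠ 0 := by
  unfold sgn; split_ifs <;> omega

lemma sgn_inj {b b' : Bool} {k k' : ℕ} (h : sgn b k = sgn b' k') : b = b' ∧ k = k' := by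
  unfold sgn at h
  rcases b <;> rcases b' <;> simp_all <;> omega

lemma sgn_recover (z : ℤ) (hz : z ≠ 0) : sgn (decide (z < 0)) (z.natAbs - 1) = z := by
  unfold sgn
  split_ifs with hb
  · simp only [decide_eq_true_eq] at hb
    omega
  · simp only [decide_eq_true_eq] at hb
    omega

def eCfun (p : (ℕ × ℕ) × Bool × Bool) : Fin 2 → ℤ := ![sgn p.2.1 p.1.1, sgn p.2.2 p.1.2]

lemma eC_mem (p : (ℕ × ℕ) × Bool × Bool) : eCfun p ∈ SC :=
  ⟨by simp [eCfun]; exact sgn_ne_zero _ _, by simp [eCfun]; exact sgn_ne_zero _ _⟩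

def eC : ((ℕ × ℕ) × Bool × Bool) ≃ SC :=
  Equiv.ofBijective (fun p => ⟨eCfun p, eC_mem p⟩) (by
    constructor
    · rintro ⟨⟨m, n⟩, b1, b2⟩ ⟨⟨m', n'⟩, b1', b2'⟩ hpq
      have hval : eCfun ((m, n), b1, b2) = eCfun ((m', n'), b1', b2') :=
        congrArg Subtype.val hpq
      have h0 := congrFun hval 0
      have h1 := congrFun hval 1
      simp only [eCfun, Matrix.cons_val_zero, Matrix.cons_val_one, Matrix.head_cons] at h0 h1
      obtain ⟨hb1, hm⟩ := sgn_inj h0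
      obtain ⟨hb2, hn⟩ := sgn_inj h1
      simp_all
    · rintro ⟨m, hm0, hm1⟩
      refine ⟨⟨⟨(m 0).natAbs - 1, (m 1).natAbs - 1⟩, decide (m 0 < 0), decide (m 1 < 0)⟩, ?_⟩
      apply Subtype.ext
      funext i
      fin_cases i
      · show eCfun _ 0 = m 0
        simp only [eCfun, Matrix.cons_val_zero]
        exact sgn_recover _ hm0
      · show eCfun _ 1 = m 1
        simp only [eCfun, Matrix.cons_val_one, Matrix.head_cons]
        exact sgn_recover _ hm1)

lemma summable_prod_geo (a r c s : ℝ) (ha : 0 ≤ a) (hc : 0 ≤ c)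
    (hr0 : 0 ≤ r) (hr : r < 1) (hs0 : 0 ≤ s) (hs : s < 1) :
    Summable (fun p : ℕ × ℕ => a * r ^ p.1 * (c * s ^ p.2)) :=
  (summable_geo a r hr0 hr).mul_of_nonneg (summable_geo c s hs0 hs)
    (fun n => by positivity) (fun n => by positivity)

lemma tsum_prod_geo (a r c s : ℝ) (ha : 0 ≤ a) (hc : 0 ≤ c)
    (hr0 : 0 ≤ r) (hr : r < 1) (hs0 : 0 ≤ s) (hs : s < 1) :
    ∑' p : ℕ × ℕ, a * r ^ p.1 * (c * s ^ p.2) = a / (1 - r) * (c / (1 - s)) := by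
  rw [Summable.tsum_prod' (summable_prod_geo a r c s ha hc hr0 hr hs0 hs)
    (fun b => ((summable_geo c s hs0 hs).mul_left (a * r ^ b)))]
  have : ∀ b : ℕ, ∑' n : ℕ, a * r ^ b * (c * s ^ n) = a * r ^ b * (c / (1 - s)) := by
    intro b
    rw [tsum_mul_left, tsum_geo c s hs0 hs]
  simp only [this]
  rw [tsum_mul_right, tsum_geo a r hr0 hr]

end Stmt9Aux
namespace Stmt9Aux

set_option maxHeartbeats 2000000 in
lemma pieceC (τ : Mat2) (hτ : inH2 τ) (h : y3 τ ^ 2 ≤ 1/4 * y1 τ * y2 τ) :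
    ∑' x : SC, FF τ x ≤
      2 * (Real.exp (-Real.pi * y1 τ * (1/2)) / (1 - Real.exp (-Real.pi * y1 τ * (3/2))) *
        (Real.exp (-Real.pi * y2 τ * (1/2)) / (1 - Real.exp (-Real.pi * y2 τ * (3/2))))) +
      2 * (Real.exp (-Real.pi * y1 τ * (3/2)) / (1 - Real.exp (-Real.pi * y1 τ * (9/2))) *
        (Real.exp (-Real.pi * y2 τ * (3/2)) / (1 - Real.exp (-Real.pi * y2 τ * (9/2))))) := by
  have hy1 := y1_pos τ hτ
  have hy2 := y2_pos τ hτ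
  have hpi := Real.pi_pos
  set A1 := Real.exp (-Real.pi * y1 τ * (1/2)) with hA1
  set R1 := Real.exp (-Real.pi * y1 τ * (3/2)) with hR1
  set T1 := Real.exp (-Real.pi * y1 τ * (9/2)) with hT1
  set A2 := Real.exp (-Real.pi * y2 τ * (1/2)) with hA2
  set R2 := Real.exp (-Real.pi * y2 τ * (3/2)) with hR2
  set T2 := Real.exp (-Real.pi * y2 τ * (9/2)) with hT2
  have hA1p : 0 ≤ A1 := (Real.exp_pos _).le
  have hA2p : 0 ≤ A2 := (Real.exp_pos _).le
  have hR1p : 0 ≤ R1 := (Real.exp_pos _).le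
  have hR2p : 0 ≤ R2 := (Real.exp_pos _).le
  have hT1p : 0 ≤ T1 := (Real.exp_pos _).le
  have hT2p : 0 ≤ T2 := (Real.exp_pos _).le
  have hR1lt : R1 < 1 := Real.exp_lt_one_iff.mpr (by nlinarith)
  have hR2lt : R2 < 1 := Real.exp_lt_one_iff.mpr (by nlinarith)
  have hT1lt : T1 < 1 := Real.exp_lt_one_iff.mpr (by nlinarith)
  have hT2lt : T2 < 1 := Real.exp_lt_one_iff.mpr (by nlinarith)
  have hsub : Summable (fun x : SC => FF τ x) := (summable_FF τ hτ h).subtype SC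
  have hsum : Summable (fun p : (ℕ × ℕ) × Bool × Bool => FF τ (eCfun p)) :=
    eC.summable_iff.mpr hsub
  have heq : ∑' x : SC, FF τ x = ∑' p, FF τ (eCfun p) :=
    (eC.tsum_eq (fun x : SC => FF τ x)).symm
  have hfib : HasSum (fun mn : ℕ × ℕ => ∑' bb : Bool × Bool, FF τ (eCfun (mn, bb)))
      (∑' p, FF τ (eCfun p)) :=
    hsum.hasSum.prod_fiberwise (fun mn => (hsum.prod_factor mn).hasSum)
  -- the comparison series
  set tgt : ℕ × ℕ → ℝ := fun mn =>
    2 * (A1 * R1 ^ mn.1 * (A2 * R2 ^ mn.2)) + 2 * (R1 * T1 ^ mn.1 * (R2 * T2 ^ mn.2)) with htgt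
  have htgtsum : Summable tgt :=
    ((summable_prod_geo A1 R1 A2 R2 hA1p hA2p hR1p hR1lt hR2p hR2lt).mul_left 2).add
      ((summable_prod_geo R1 T1 R2 T2 hR1p hR2p hT1p hT1lt hT2p hT2lt).mul_left 2)
  have hpoint : ∀ mn : ℕ × ℕ,
      (∑' bb : Bool × Bool, FF τ (eCfun (mn, bb))) ≤ tgt mn := by
    rintro ⟨m, n⟩
    set M : ℝ := (m : ℝ) + 1 with hM
    set N : ℝ := (n : ℝ) + 1 with hN
    set Sv : ℝ := M^2 * y1 τ + N^2 * y2 τ with hSv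
    set cv : ℝ := 2 * M * N * y3 τ with hcv
    have hSvpos : 0 < Sv := by positivity
    have hFF1 : FF τ (eCfun ((m,n), false, false)) = Real.exp (-(Real.pi * Sv + Real.pi * cv)) := by
      simp only [FF, Qy, eCfun, sgn, if_false, Matrix.cons_val_zero, Matrix.cons_val_one,
        Matrix.head_cons, Bool.false_eq_true]
      push_cast
      congr 1
      rw [hSv, hcv, hM, hN]
      ring
    have hFF2 : FF τ (eCfun ((m,n), true, true)) = Real.exp (-(Real.pi * Sv + Real.pi * cv)) := by
      simp only [FF, Qy, eCfun, sgn, if_true, Matrix.cons_val_zero, Matrix.cons_val_one,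
        Matrix.head_cons]
      push_cast
      congr 1
      rw [hSv, hcv, hM, hN]
      ring
    have hFF3 : FF τ (eCfun ((m,n), false, true)) = Real.exp (-(Real.pi * Sv - Real.pi * cv)) := by
      simp only [FF, Qy, eCfun, sgn, Matrix.cons_val_zero, Matrix.cons_val_one,
        Matrix.head_cons, Bool.false_eq_true, if_true, if_false]
      push_cast
      congr 1
      rw [hSv, hcv, hM, hN]
      ring
    have hFF4 : FF τ (eCfun ((m,n), true, false)) = Real.exp (-(Real.pi * Sv - Real.pi * cv)) := by
      simp only [FF, Qy, eCfun, sgn, Matrix.cons_val_zero, Matrix.cons_val_one,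
        Matrix.head_cons, Bool.false_eq_true, if_true, if_false]
      push_cast
      congr 1
      rw [hSv, hcv, hM, hN]
      ring
    have hsum4 : (∑' bb : Bool × Bool, FF τ (eCfun ((m,n), bb))) =
        2 * Real.exp (-(Real.pi * Sv + Real.pi * cv)) +
        2 * Real.exp (-(Real.pi * Sv - Real.pi * cv)) := by
      rw [tsum_fintype]
      rw [Fintype.sum_prod_type]
      simp only [Fintype.sum_bool]
      rw [hFF1, hFF2, hFF3, hFF4]
      ring
    have hcabs : |Real.pi * cv| ≤ Real.pi * Sv / 2 := by
      have hcb := cross_bound τ hτ h M N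
      rw [abs_mul, _root_.abs_of_nonneg hpi.le]
      calc Real.pi * |cv| ≤ Real.pi * (Sv / 2) := by
            apply mul_le_mul_of_nonneg_left _ hpi.le
            rw [hcv, hSv]
            exact hcb
        _ = Real.pi * Sv / 2 := by ring
    have hpair := pair_exp (Real.pi * Sv) (Real.pi * cv) hcabs
    -- bound the two exponentials by geometric terms
    have hm2 : (m:ℝ) ≤ (m:ℝ)^2 := by exact_mod_cast Nat.le_self_pow two_ne_zero m
    have hn2 : (n:ℝ) ≤ (n:ℝ)^2 := by exact_mod_cast Nat.le_self_pow two_ne_zero n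
    have k1 : (1:ℝ) + 3*(m:ℝ) ≤ M^2 := by rw [hM]; ring_nf; linarith [hm2]
    have k2 : (1:ℝ) + 3*(n:ℝ) ≤ N^2 := by rw [hN]; ring_nf; linarith [hn2]
    have kk1 := mul_le_mul_of_nonneg_left k1 (show (0:ℝ) ≤ Real.pi * y1 τ / 2 by positivity)
    have kk2 := mul_le_mul_of_nonneg_left k2 (show (0:ℝ) ≤ Real.pi * y2 τ / 2 by positivity)
    have kk3 := mul_le_mul_of_nonneg_left k1 (show (0:ℝ) ≤ 3 * (Real.pi * y1 τ) / 2 by positivity)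
    have kk4 := mul_le_mul_of_nonneg_left k2 (show (0:ℝ) ≤ 3 * (Real.pi * y2 τ) / 2 by positivity)
    have hb1 : Real.exp (-(Real.pi * Sv / 2)) ≤ A1 * R1 ^ m * (A2 * R2 ^ n) := by
      rw [hA1, hR1, hA2, hR2, ← Real.exp_nat_mul, ← Real.exp_nat_mul,
        ← Real.exp_add, ← Real.exp_add, ← Real.exp_add, Real.exp_le_exp, hSv]
      linarith [kk1, kk2]
    have hb2 : Real.exp (-(3 * (Real.pi * Sv) / 2)) ≤ R1 * T1 ^ m * (R2 * T2 ^ n) := by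
      rw [hR1, hT1, hR2, hT2, ← Real.exp_nat_mul, ← Real.exp_nat_mul,
        ← Real.exp_add, ← Real.exp_add, ← Real.exp_add, Real.exp_le_exp, hSv]
      linarith [kk3, kk4]
    rw [hsum4, htgt]
    have : Real.exp (-(Real.pi * Sv + Real.pi * cv)) + Real.exp (-(Real.pi * Sv - Real.pi * cv)) ≤
        A1 * R1 ^ m * (A2 * R2 ^ n) + R1 * T1 ^ m * (R2 * T2 ^ n) := by
      calc Real.exp (-(Real.pi * Sv + Real.pi * cv)) + Real.exp (-(Real.pi * Sv - Real.pi * cv))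
          ≤ Real.exp (-(Real.pi * Sv / 2)) + Real.exp (-(3 * (Real.pi * Sv) / 2)) := by
            have h3 : -(3 * (Real.pi * Sv) / 2) = -(3 * (Real.pi * Sv) / 2) := rfl
            calc Real.exp (-(Real.pi * Sv + Real.pi * cv)) + Real.exp (-(Real.pi * Sv - Real.pi * cv))
                ≤ Real.exp (-(Real.pi * Sv / 2)) + Real.exp (-(3 * (Real.pi * Sv) / 2)) := by
                  have := hpair
                  convert this using 3 <;> ring
              _ = _ := rfl
        _ ≤ _ := by gcongr
    simp only
    linarith
  calc ∑' x : SC, FF τ x = ∑' mn : ℕ × ℕ, ∑' bb : Bool × Bool, FF τ (eCfun (mn, bb)) := by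
        rw [heq, hfib.tsum_eq]
    _ ≤ ∑' mn, tgt mn := Summable.tsum_le_tsum hpoint hfib.summable htgtsum
    _ = 2 * (A1 / (1 - R1) * (A2 / (1 - R2))) + 2 * (R1 / (1 - T1) * (R2 / (1 - T2))) := by
        rw [htgt, Summable.tsum_add ((summable_prod_geo A1 R1 A2 R2 hA1p hA2p hR1p hR1lt hR2p hR2lt).mul_left 2)
          ((summable_prod_geo R1 T1 R2 T2 hR1p hR2p hT1p hT1lt hT2p hT2lt).mul_left 2),
          tsum_mul_left, tsum_mul_left,
          tsum_prod_geo A1 R1 A2 R2 hA1p hA2p hR1p hR1lt hR2p hR2lt,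
          tsum_prod_geo R1 T1 R2 T2 hR1p hR2p hT1p hT1lt hT2p hT2lt]

end Stmt9Aux
namespace Stmt9Aux

lemma funext2 {m : Fin 2 → ℤ} {a b : ℤ} : m = ![a, b] ↔ m 0 = a ∧ m 1 = b := by
  constructor
  · rintro rfl; simp
  · rintro ⟨h0, h1⟩
    funext i
    fin_cases i
    · simpa using h0
    · simpa using h1

lemma mem_S5_iff (m : Fin 2 → ℤ) : m ∈ S5 ↔
    (m 0 = 0 ∧ m 1 = 0) ∨ (m 0 = 1 ∧ m 1 = 0) ∨ (m 0 = -1 ∧ m 1 = 0) ∨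
    (m 0 = 0 ∧ m 1 = 1) ∨ (m 0 = 0 ∧ m 1 = -1) := by
  simp [S5, v00, v10, vm10, v01, v0m1, funext2, Finset.mem_insert]

def S5c : Set (Fin 2 → ℤ) := (↑S5 : Set (Fin 2 → ℤ))ᶜ

lemma compl_decomp : S5c = SA ∪ (SB ∪ SC) := by
  unfold S5c
  ext m
  simp only [Set.mem_compl_iff, Finset.mem_coe, mem_S5_iff, Set.mem_union, SA, SB, SC,
    Set.mem_setOf_eq, ne_eq]
  omega

lemma disj_BC : Disjoint SB SC :=
  Set.disjoint_left.mpr (fun m hmB hmC => hmC.1 hmB.1)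

lemma disj_ABC : Disjoint SA (SB ∪ SC) := by
  rw [Set.disjoint_left]
  rintro m ⟨hm1, hm0⟩ (⟨h0, h1⟩ | ⟨h0, h1⟩)
  · omega
  · exact h1 hm1

lemma rho0_eq (τ : Mat2) : rho0 (q1 τ) (q2 τ) =
    2 * (Real.exp (-Real.pi * y1 τ * 4) / (1 - Real.exp (-Real.pi * y1 τ * 5))) +
    (2 * (Real.exp (-Real.pi * y2 τ * 4) / (1 - Real.exp (-Real.pi * y2 τ * 5))) +
    (2 * (Real.exp (-Real.pi * y1 τ * (1/2)) / (1 - Real.exp (-Real.pi * y1 τ * (3/2))) *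
        (Real.exp (-Real.pi * y2 τ * (1/2)) / (1 - Real.exp (-Real.pi * y2 τ * (3/2))))) +
      2 * (Real.exp (-Real.pi * y1 τ * (3/2)) / (1 - Real.exp (-Real.pi * y1 τ * (9/2))) *
        (Real.exp (-Real.pi * y2 τ * (3/2)) / (1 - Real.exp (-Real.pi * y2 τ * (9/2))))))) := by
  unfold rho0 q1 q2
  simp only [← Real.exp_mul]
  rw [div_mul_div_comm, div_mul_div_comm]
  norm_num
  ring

lemma tail_bound (τ : Mat2) (hτ : inH2 τ) (h : y3 τ ^ 2 ≤ 1/4 * y1 τ * y2 τ) :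
    ∑' x : S5c, FF τ x ≤ rho0 (q1 τ) (q2 τ) := by
  have hsF := summable_FF τ hτ h
  rw [compl_decomp]
  rw [Summable.tsum_union_disjoint disj_ABC (hsF.subtype _) (hsF.subtype _),
    Summable.tsum_union_disjoint disj_BC (hsF.subtype _) (hsF.subtype _)]
  rw [rho0_eq τ]
  exact add_le_add (pieceA τ hτ h)
    (add_le_add (pieceB τ hτ h) (pieceC τ hτ h))

end Stmt9Aux
namespace Stmt9Aux

lemma summable_term (τ : Mat2) (hτ : inH2 τ) (h : y3 τ ^ 2 ≤ 1/4 * y1 τ * y2 τ)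
    (b : Fin 2 → ℤ) : Summable (term b τ) := by
  apply Summable.of_norm
  have : (fun m => ‖term b τ m‖) = FF τ :=
    funext fun m => by rw [norm_term τ hτ.1 b m]
  rw [this]
  exact summable_FF τ hτ h

def Pc (P : Finset (Fin 2 → ℤ)) : Set (Fin 2 → ℤ) := (↑P : Set (Fin 2 → ℤ))ᶜ

lemma sum_add_tsum_Pc {f : (Fin 2 → ℤ) → ℂ} (hf : Summable f) (P : Finset (Fin 2 → ℤ)) :
    ∑ m ∈ P, f m + ∑' x : Pc P, f x = ∑' m, f m := by
  unfold Pc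
  simpa [Finset.tsum_subtype' P f, Finset.sum_attach] using
    Summable.tsum_subtype_add_tsum_subtype_compl hf (↑P : Set (Fin 2 → ℤ))

lemma tsum_Pc_FF (τ : Mat2) (hτ : inH2 τ) (h : y3 τ ^ 2 ≤ 1/4 * y1 τ * y2 τ)
    (P : Finset (Fin 2 → ℤ)) (hP : P ⊆ S5) :
    ∑' x : Pc P, FF τ x =
      (∑ m ∈ S5, FF τ m - ∑ m ∈ P, FF τ m) + ∑' x : S5c, FF τ x := by
  have hsF := summable_FF τ hτ h
  have hset : ((↑P : Set (Fin 2 → ℤ))ᶜ) = (↑(S5 \ P) : Set (Fin 2 → ℤ)) ∪ S5c := by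
    unfold S5c
    ext m
    simp only [Set.mem_compl_iff, Finset.mem_coe, Set.mem_union, Finset.mem_sdiff]
    by_cases hm : m ∈ S5
    · simp [hm]
    · have hmP : m ∉ P := fun hmP => hm (hP hmP)
      simp [hm, hmP]
  have hdisj : Disjoint (↑(S5 \ P) : Set (Fin 2 → ℤ)) S5c := by
    rw [Set.disjoint_left]
    intro m hm hmc
    exact hmc (Finset.mem_coe.mpr (Finset.mem_sdiff.mp (Finset.mem_coe.mp hm)).1)
  unfold Pc
  rw [hset, Summable.tsum_union_disjoint hdisj (hsF.subtype _) (hsF.subtype _),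
    Finset.tsum_subtype' (S5 \ P) (FF τ), Finset.sum_sdiff_eq_sub hP]

lemma abs_tsum_Pc_le (τ : Mat2) (hτ : inH2 τ) (h : y3 τ ^ 2 ≤ 1/4 * y1 τ * y2 τ)
    (b : Fin 2 → ℤ) (P : Finset (Fin 2 → ℤ)) :
    ‖∑' x : Pc P, term b τ x‖ ≤ ∑' x : Pc P, FF τ x := by
  have hsF := summable_FF τ hτ h
  refine (norm_tsum_le_tsum_norm ?_).trans_eq (tsum_congr fun x => by
    rw [norm_term τ hτ.1 b x])
  refine (hsF.subtype (Pc P)).congr fun x => ?_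
  exact (by rw [norm_term τ hτ.1 b x.1] :
    ‖term b τ x.1‖ = FF τ x.1).symm

lemma key (τ : Mat2) (hτ : inH2 τ) (h : y3 τ ^ 2 ≤ 1/4 * y1 τ * y2 τ)
    (b : Fin 2 → ℤ) (P : Finset (Fin 2 → ℤ)) (hP : P ⊆ S5) :
    ‖theta ![0,0] b τ - ∑ m ∈ P, term b τ m‖ ≤
      rho0 (q1 τ) (q2 τ) + (∑ m ∈ S5, FF τ m - ∑ m ∈ P, FF τ m) := by
  have hsT := summable_term τ hτ h b
  have hdiff : theta ![0,0] b τ - ∑ m ∈ P, term b τ m = ∑' x : Pc P, term b τ x := by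
    rw [theta_eq, ← sum_add_tsum_Pc hsT P]
    ring
  rw [hdiff]
  calc ‖∑' x : Pc P, term b τ x‖ ≤ ∑' x : Pc P, FF τ x :=
        abs_tsum_Pc_le τ hτ h b P
    _ = (∑ m ∈ S5, FF τ m - ∑ m ∈ P, FF τ m) + ∑' x : S5c, FF τ x :=
        tsum_Pc_FF τ hτ h P hP
    _ ≤ _ := by linarith [tail_bound τ hτ h]

-- evaluations
lemma term_v00 (b : Fin 2 → ℤ) (τ : Mat2) : term b τ v00 = 1 := by
  simp [term, v00, Fin.sum_univ_two]

lemma term_v10 (b : Fin 2 → ℤ) (τ : Mat2) (hb : b 0 = 0) :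
    term b τ v10 = Complex.exp ((Real.pi : ℂ) * Complex.I * z1 τ) := by
  unfold term
  congr 1
  simp [v10, Fin.sum_univ_two, hb, z1]

lemma term_vm10 (b : Fin 2 → ℤ) (τ : Mat2) (hb : b 0 = 0) :
    term b τ vm10 = Complex.exp ((Real.pi : ℂ) * Complex.I * z1 τ) := by
  unfold term
  congr 1
  simp [vm10, Fin.sum_univ_two, hb, z1]

lemma term_v01 (b : Fin 2 → ℤ) (τ : Mat2) (hb : b 1 = 0) :
    term b τ v01 = Complex.exp ((Real.pi : ℂ) * Complex.I * z2 τ) := by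
  unfold term
  congr 1
  simp [v01, Fin.sum_univ_two, hb, z2]

lemma term_v0m1 (b : Fin 2 → ℤ) (τ : Mat2) (hb : b 1 = 0) :
    term b τ v0m1 = Complex.exp ((Real.pi : ℂ) * Complex.I * z2 τ) := by
  unfold term
  congr 1
  simp [v0m1, Fin.sum_univ_two, hb, z2]

lemma FF_v00 (τ : Mat2) : FF τ v00 = 1 := by
  norm_num [FF, Qy, v00]

lemma FF_v10 (τ : Mat2) : FF τ v10 = q1 τ := by
  norm_num [FF, Qy, v10, q1]

lemma FF_vm10 (τ : Mat2) : FF τ vm10 = q1 τ := by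
  norm_num [FF, Qy, vm10, q1]

lemma FF_v01 (τ : Mat2) : FF τ v01 = q2 τ := by
  norm_num [FF, Qy, v01, q2]

lemma FF_v0m1 (τ : Mat2) : FF τ v0m1 = q2 τ := by
  norm_num [FF, Qy, v0m1, q2]

def P1 : Finset (Fin 2 → ℤ) := {v00, v10, vm10}
def P2 : Finset (Fin 2 → ℤ) := {v00, v01, v0m1}
def P0 : Finset (Fin 2 → ℤ) := {v00}

lemma sum_S5_term (b : Fin 2 → ℤ) (τ : Mat2) (hb0 : b 0 = 0) (hb1 : b 1 = 0) :
    ∑ m ∈ S5, term b τ m = xi0 τ := by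
  rw [S5, Finset.sum_insert (by decide), Finset.sum_insert (by decide),
    Finset.sum_insert (by decide), Finset.sum_insert (by decide), Finset.sum_singleton,
    term_v00, term_v10 b τ hb0, term_vm10 b τ hb0, term_v01 b τ hb1, term_v0m1 b τ hb1, xi0]
  ring

lemma sum_P1_term (b : Fin 2 → ℤ) (τ : Mat2) (hb0 : b 0 = 0) :
    ∑ m ∈ P1, term b τ m = xi02 τ := by
  rw [P1, Finset.sum_insert (by decide), Finset.sum_insert (by decide), Finset.sum_singleton,
    term_v00, term_v10 b τ hb0, term_vm10 b τ hb0, xi02]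
  ring

lemma sum_P2_term (b : Fin 2 → ℤ) (τ : Mat2) (hb1 : b 1 = 0) :
    ∑ m ∈ P2, term b τ m = xi01 τ := by
  rw [P2, Finset.sum_insert (by decide), Finset.sum_insert (by decide), Finset.sum_singleton,
    term_v00, term_v01 b τ hb1, term_v0m1 b τ hb1, xi01]
  ring

lemma sum_P0_term (b : Fin 2 → ℤ) (τ : Mat2) :
    ∑ m ∈ P0, term b τ m = 1 := by
  rw [P0, Finset.sum_singleton, term_v00]

lemma sum_S5_FF (τ : Mat2) : ∑ m ∈ S5, FF τ m = 1 + 2 * q1 τ + 2 * q2 τ := by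
  rw [S5, Finset.sum_insert (by decide), Finset.sum_insert (by decide),
    Finset.sum_insert (by decide), Finset.sum_insert (by decide), Finset.sum_singleton,
    FF_v00, FF_v10, FF_vm10, FF_v01, FF_v0m1]
  ring

lemma sum_P1_FF (τ : Mat2) : ∑ m ∈ P1, FF τ m = 1 + 2 * q1 τ := by
  rw [P1, Finset.sum_insert (by decide), Finset.sum_insert (by decide), Finset.sum_singleton,
    FF_v00, FF_v10, FF_vm10]
  ring

lemma sum_P2_FF (τ : Mat2) : ∑ m ∈ P2, FF τ m = 1 + 2 * q2 τ := by
  rw [P2, Finset.sum_insert (by decide), Finset.sum_insert (by decide), Finset.sum_singleton,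
    FF_v00, FF_v01, FF_v0m1]
  ring

lemma sum_P0_FF (τ : Mat2) : ∑ m ∈ P0, FF τ m = 1 := by
  rw [P0, Finset.sum_singleton, FF_v00]

lemma hP1S5 : P1 ⊆ S5 := by decide
lemma hP2S5 : P2 ⊆ S5 := by decide
lemma hP0S5 : P0 ⊆ S5 := by decide

end Stmt9Aux

open Stmt9Aux

/-- Estimates on θ₀, θ₁, θ₂, θ₃. -/
theorem stmt_9 (τ : Mat2) (hτ : inH2 τ) (h : y3 τ ^ 2 ≤ 1/4 * y1 τ * y2 τ) :
    ‖thetaIdx 0 τ - xi0 τ‖ ≤ rho0 (q1 τ) (q2 τ) ∧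
    (∀ j ∈ ({0, 2} : Set ℕ),
      ‖thetaIdx j τ - xi02 τ‖ ≤ rho0 (q1 τ) (q2 τ) + 2 * q2 τ) ∧
    (∀ j ∈ ({0, 1} : Set ℕ),
      ‖thetaIdx j τ - xi01 τ‖ ≤ rho0 (q1 τ) (q2 τ) + 2 * q1 τ) ∧
    (∀ j ≤ 3,
      ‖thetaIdx j τ - 1‖ ≤ rho0 (q1 τ) (q2 τ) + 2 * q1 τ + 2 * q2 τ) := by
  have t0 : thetaIdx 0 τ = theta ![0,0] ![0,0] τ := by norm_num [thetaIdx]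
  have t1 : thetaIdx 1 τ = theta ![0,0] ![1,0] τ := by norm_num [thetaIdx]
  have t2 : thetaIdx 2 τ = theta ![0,0] ![0,1] τ := by norm_num [thetaIdx]
  have t3 : thetaIdx 3 τ = theta ![0,0] ![1,1] τ := by norm_num [thetaIdx]
  refine ⟨?_, ?_, ?_, ?_⟩
  · have k := key τ hτ h ![0,0] S5 (subset_refl S5)
    rw [sum_S5_term ![0,0] τ rfl rfl] at k
    rw [t0]
    simpa using k
  · intro j hj
    simp only [Set.mem_insert_iff, Set.mem_singleton_iff] at hj
    rcases hj with rfl | rfl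
    · have k := key τ hτ h ![0,0] P1 hP1S5
      rw [sum_P1_term ![0,0] τ rfl, sum_S5_FF, sum_P1_FF] at k
      rw [t0]
      linarith [k]
    · have k := key τ hτ h ![0,1] P1 hP1S5
      rw [sum_P1_term ![0,1] τ rfl, sum_S5_FF, sum_P1_FF] at k
      rw [t2]
      linarith [k]
  · intro j hj
    simp only [Set.mem_insert_iff, Set.mem_singleton_iff] at hj
    rcases hj with rfl | rfl
    · have k := key τ hτ h ![0,0] P2 hP2S5
      rw [sum_P2_term ![0,0] τ rfl, sum_S5_FF, sum_P2_FF] at k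
      rw [t0]
      linarith [k]
    · have k := key τ hτ h ![1,0] P2 hP2S5
      rw [sum_P2_term ![1,0] τ rfl, sum_S5_FF, sum_P2_FF] at k
      rw [t1]
      linarith [k]
  · intro j hj
    interval_cases j
    · have k := key τ hτ h ![0,0] P0 hP0S5
      rw [sum_P0_term ![0,0] τ, sum_S5_FF, sum_P0_FF] at k
      rw [t0]
      linarith [k]
    · have k := key τ hτ h ![1,0] P0 hP0S5
      rw [sum_P0_term ![1,0] τ, sum_S5_FF, sum_P0_FF] at k
      rw [t1]
      linarith [k]
    · have k := key τ hτ h ![0,1] P0 hP0S5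
      rw [sum_P0_term ![0,1] τ, sum_S5_FF, sum_P0_FF] at k
      rw [t2]
      linarith [k]
    · have k := key τ hτ h ![1,1] P0 hP0S5
      rw [sum_P0_term ![1,1] τ, sum_S5_FF, sum_P0_FF] at k
      rw [t3]
      linarith [k]
end
end
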